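/- arXiv:2009.00124 — 5 statements merged into one kernel-verified Lean document; each statement's English description precedes it below -/
import Mathlib

section
/- The center of the Artin braid group B₃ is the cyclic subgroup generated by Δ² = (σ₁σ₂)³; that is, Subgroup.center B₃ = Subgroup.zpowers ((σ₁σ₂)³), and moreover the element (σ₁σ₂)³ has infinite order in B₃. -/
/-- The braid relator `σ₁σ₂σ₁σ₂⁻¹σ₁⁻¹σ₂⁻¹` in the free group on two generators. -/
def braidRel3 : Set (FreeGroup (Fin 2)) :=
  {FreeGroup.of 0 * FreeGroup.of 1 * FreeGroup.of 0 *
    (FreeGroup.of 1)⁻¹ * (FreeGroup.of 0)⁻¹ * (FreeGroup.of 1)⁻¹}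

/-- The Artin braid group on 3 strands. -/
abbrev BraidGroup3 : Type := PresentedGroup braidRel3

/-- The standard generators σ₁, σ₂ of the braid group `B₃`. -/
def σ (i : Fin 2) : BraidGroup3 := PresentedGroup.of i

/-- The full twist Δ² = (σ₁σ₂)³. -/
def Δsq : BraidGroup3 := (σ 0 * σ 1) ^ 3

namespace BraidCenterAux

/-! ### The braid relation and centrality of `Δsq` -/

theorem braid : σ 0 * σ 1 * σ 0 = σ 1 * σ 0 * σ 1 := by
  have h : (PresentedGroup.mk braidRel3 (FreeGroup.of 0 * FreeGroup.of 1 * FreeGroup.of 0 *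
      (FreeGroup.of 1)⁻¹ * (FreeGroup.of 0)⁻¹ * (FreeGroup.of 1)⁻¹)) = 1 :=
    (QuotientGroup.eq_one_iff _).2 (Subgroup.subset_normalClosure rfl)
  simp only [map_mul, map_inv] at h
  rw [← mul_inv_eq_one]
  group at h ⊢
  exact h

theorem delta_a : (σ 0 * σ 1 * σ 0) * σ 0 = σ 1 * (σ 0 * σ 1 * σ 0) := by
  have h := braid
  calc (σ 0 * σ 1 * σ 0) * σ 0 = (σ 1 * σ 0 * σ 1) * σ 0 := by rw [h]
    _ = σ 1 * (σ 0 * σ 1 * σ 0) := by group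

theorem delta_b : (σ 0 * σ 1 * σ 0) * σ 1 = σ 0 * (σ 0 * σ 1 * σ 0) := by
  calc (σ 0 * σ 1 * σ 0) * σ 1 = σ 0 * (σ 1 * σ 0 * σ 1) := by group
    _ = σ 0 * (σ 0 * σ 1 * σ 0) := by rw [braid]

theorem dsq_eq : Δsq = (σ 0 * σ 1 * σ 0) * (σ 0 * σ 1 * σ 0) := by
  show (σ 0 * σ 1) ^ 3 = _
  calc (σ 0 * σ 1) ^ 3 = (σ 0 * σ 1 * σ 0) * (σ 1 * σ 0 * σ 1) := by
        rw [pow_succ, pow_succ, pow_one]; group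
    _ = _ := by rw [braid]

theorem dsq_comm_a : Δsq * σ 0 = σ 0 * Δsq := by
  rw [dsq_eq, mul_assoc, delta_a, ← mul_assoc, delta_b, mul_assoc]

theorem dsq_comm_b : Δsq * σ 1 = σ 1 * Δsq := by
  rw [dsq_eq, mul_assoc, delta_b, ← mul_assoc, delta_a, mul_assoc]

theorem dsq_central : Δsq ∈ Subgroup.center BraidGroup3 := by
  rw [Subgroup.mem_center_iff]
  intro g
  have : g ∈ Subgroup.centralizer {Δsq} := by
    have hgen := PresentedGroup.closure_range_of braidRel3
    have : (⊤ : Subgroup BraidGroup3) ≤ Subgroup.centralizer {Δsq} := by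
      rw [← hgen]
      apply Subgroup.closure_le _ |>.2
      rintro x ⟨i, rfl⟩
      show PresentedGroup.of i ∈ Subgroup.centralizer {Δsq}
      rw [Subgroup.mem_centralizer_iff]
      rintro y ⟨rfl⟩
      fin_cases i
      · exact dsq_comm_a
      · exact dsq_comm_b
    exact this trivial
  rw [Subgroup.mem_centralizer_iff] at this
  exact (this Δsq rfl).symm

/-! ### `Δsq` has infinite order -/

theorem not_fin : ¬ IsOfFinOrder Δsq := by
  have hrel : ∀ r ∈ braidRel3,
      FreeGroup.lift (fun _ : Fin 2 => (Multiplicative.ofAdd (1 : ℤ))) r = 1 := by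
    intro r hr
    rw [braidRel3, Set.mem_singleton_iff] at hr
    subst hr
    simp only [map_mul, map_inv, FreeGroup.lift_apply_of]
    group
  intro hfin
  have h2 := (PresentedGroup.toGroup hrel).isOfFinOrder hfin
  have hval : PresentedGroup.toGroup hrel Δsq = Multiplicative.ofAdd (6 : ℤ) := by
    show PresentedGroup.toGroup hrel ((σ 0 * σ 1) ^ 3) = _
    rw [map_pow, map_mul]
    show ((PresentedGroup.toGroup hrel) (PresentedGroup.of 0) *
      (PresentedGroup.toGroup hrel) (PresentedGroup.of 1)) ^ 3 = _
    rw [PresentedGroup.toGroup.of, PresentedGroup.toGroup.of]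
    rfl
  rw [hval] at h2
  obtain ⟨n, hn, he⟩ := isOfFinOrder_iff_pow_eq_one.1 h2
  have : (Multiplicative.toAdd ((Multiplicative.ofAdd (6:ℤ)) ^ n) : ℤ) = 0 := by rw [he]; rfl
  rw [toAdd_pow, toAdd_ofAdd, nsmul_eq_mul] at this
  omega

/-! ### Free products over `Fin 2` have small center -/

open Monoid CoprodI

section Coprod

variable {G : Fin 2 → Type} [∀ i, Group (G i)] [∀ i, DecidableEq (G i)]

theorem neword_prod_inj {i j k l : Fin 2} (u : NeWord G i j) (v : NeWord G k l)
    (h : u.prod = v.prod) : i = k ∧ j = l := by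
  have hw : u.toWord = v.toWord := Word.equiv.symm.injective h
  have hl : u.toList = v.toList := congrArg Word.toList hw
  constructor
  · have h1 := u.toList_head?
    rw [hl, v.toList_head?, Option.some_inj] at h1
    exact (congrArg Sigma.fst h1).symm
  · have h1 := u.toList_getLast?
    rw [hl, v.toList_getLast?, Option.some_inj] at h1
    exact (congrArg Sigma.fst h1).symm

theorem no_central_loop {i k : Fin 2} (hki : k ≠ i) [Nontrivial (G k)]
    (w : NeWord G i i) (hc : ∀ g, g * w.prod = w.prod * g) : False := by
  obtain ⟨h, hh⟩ := exists_ne (1 : G k)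
  have := neword_prod_inj (NeWord.append (NeWord.singleton h hh) hki w)
    (NeWord.append w (Ne.symm hki) (NeWord.singleton h hh)) (by
      rw [NeWord.append_prod, NeWord.append_prod, NeWord.prod_singleton, hc])
  exact hki this.1

theorem no_central_10 (h3 : ∀ c : G 1, ∃ h : G 1, h ≠ 1 ∧ h * c ≠ 1)
    (w : NeWord G 1 0) (hc : ∀ g, g * w.prod = w.prod * g) : False := by
  obtain ⟨h, hh1, hhc⟩ := h3 w.head
  have := neword_prod_inj (NeWord.mulHead w h hhc)
    (NeWord.append w (by decide : (0 : Fin 2) ≠ 1) (NeWord.singleton h hh1)) (by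
      rw [NeWord.mulHead_prod, NeWord.append_prod, NeWord.prod_singleton, hc])
  exact absurd this.2 (by decide)

theorem coprod_center_eq_one [Nontrivial (G 0)] [Nontrivial (G 1)]
    (h3 : ∀ c : G 1, ∃ h : G 1, h ≠ 1 ∧ h * c ≠ 1)
    {z : CoprodI G} (hc : ∀ g, g * z = z * g) : z = 1 := by
  by_contra hne
  have hwne : Word.equiv z ≠ Word.empty := by
    intro h
    exact hne (by simpa using (congrArg Word.equiv.symm h).trans Word.prod_empty)
  obtain ⟨i, j, w, hw⟩ := NeWord.of_word _ hwne
  have hprod : w.prod = z := by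
    show Word.prod w.toWord = z
    rw [hw]
    exact Word.equiv.symm_apply_apply z
  rw [← hprod] at hc
  have hcinv : ∀ g, g * w.inv.prod = w.inv.prod * g := by
    intro g
    rw [NeWord.inv_prod]
    have h := hc g⁻¹
    calc g * w.prod⁻¹ = (w.prod * g⁻¹)⁻¹ * w.prod * w.prod⁻¹ := by group
      _ = (g⁻¹ * w.prod)⁻¹ * w.prod * w.prod⁻¹ := by rw [h]
      _ = w.prod⁻¹ * g := by group
  fin_cases i <;> fin_cases j
  · exact no_central_loop (by decide : (1:Fin 2) ≠ 0) w hc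
  · exact no_central_10 h3 w.inv hcinv
  · exact no_central_10 h3 w hc
  · exact no_central_loop (by decide : (0:Fin 2) ≠ 1) w hc

end Coprod

/-! ### Homomorphisms out of `ZMod n` -/

def powHom {Q : Type*} [Group Q] (n : ℕ) (q : Q) (h : q ^ (n : ℤ) = 1) :
    Multiplicative (ZMod n) →* Q :=
  AddMonoidHom.toMultiplicativeLeft
    (ZMod.lift n ⟨zmultiplesHom (Additive Q) (Additive.ofMul q), by
      show ((n : ℤ) • Additive.ofMul q) = 0
      apply Additive.toMul.injective
      simpa using h⟩)

theorem powHom_apply_one {Q : Type*} [Group Q] (n : ℕ) (q : Q) (h : q ^ (n : ℤ) = 1) :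
    powHom n q h (Multiplicative.ofAdd (1 : ZMod n)) = q := by
  simp only [powHom, AddMonoidHom.coe_toMultiplicativeLeft, Function.comp_apply, toAdd_ofAdd]
  have h1 : ((1 : ℤ) : ZMod n) = (1 : ZMod n) := by push_cast; rfl
  rw [← h1, ZMod.lift_coe]
  show Additive.toMul ((1 : ℤ) • Additive.ofMul q) = q
  simp

/-! ### The free product `C₂ * C₃` and the map `ψ : B₃ → C₂ * C₃` -/

abbrev Fac : Fin 2 → Type := fun i => Multiplicative (ZMod (i.val + 2))

instance : Nontrivial (Fac 0) := ⟨⟨1, Multiplicative.ofAdd 1, by decide⟩⟩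
instance : Nontrivial (Fac 1) := ⟨⟨1, Multiplicative.ofAdd 1, by decide⟩⟩

theorem h3fac : ∀ c : Fac 1, ∃ h : Fac 1, h ≠ 1 ∧ h * c ≠ 1 := by decide

def x0 : Fac 0 := Multiplicative.ofAdd 1
def x1 : Fac 1 := Multiplicative.ofAdd 1

def aa : CoprodI Fac := CoprodI.of x0
def bb : CoprodI Fac := CoprodI.of x1

theorem haa : aa * aa = 1 := by
  rw [aa, ← map_mul]
  rw [show x0 * x0 = 1 by decide, map_one]

theorem hbb : bb * bb * bb = 1 := by
  rw [bb, ← map_mul, ← map_mul]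
  rw [show x1 * x1 * x1 = 1 by decide, map_one]

theorem rel_one {H : Type*} [Group H] (x y : H) (hx : x * x = 1) (hy : y * y * y = 1) :
    (y⁻¹*x) * (x⁻¹*y^2) * (y⁻¹*x) * (x⁻¹*y^2)⁻¹ * (y⁻¹*x)⁻¹ * (x⁻¹*y^2)⁻¹ = 1 := by
  have hy3 : y⁻¹ * y⁻¹ * y⁻¹ = 1 := by
    have h := congrArg Inv.inv hy
    rw [inv_one] at h
    calc y⁻¹ * y⁻¹ * y⁻¹ = (y*y*y)⁻¹ := by group
      _ = 1 := h
  calc (y⁻¹*x) * (x⁻¹*y^2) * (y⁻¹*x) * (x⁻¹*y^2)⁻¹ * (y⁻¹*x)⁻¹ * (x⁻¹*y^2)⁻¹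
      = x * (y⁻¹ * y⁻¹ * y⁻¹) * x := by group
    _ = x * x := by rw [hy3, mul_one]
    _ = 1 := hx

theorem hrelψ : ∀ r ∈ braidRel3,
    FreeGroup.lift (![bb⁻¹ * aa, aa⁻¹ * bb ^ 2] : Fin 2 → CoprodI Fac) r = 1 := by
  intro r hr
  rw [braidRel3, Set.mem_singleton_iff] at hr
  subst hr
  simp only [map_mul, map_inv, FreeGroup.lift_apply_of, Matrix.cons_val_zero, Matrix.cons_val_one,
    Matrix.head_cons]
  exact rel_one aa bb haa hbb

def ψ : BraidGroup3 →* CoprodI Fac := PresentedGroup.toGroup hrelψ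

theorem psi_s0 : ψ (σ 0) = bb⁻¹ * aa := by
  show ψ (PresentedGroup.of 0) = _
  rw [ψ, PresentedGroup.toGroup.of]
  simp

theorem psi_s1 : ψ (σ 1) = aa⁻¹ * bb ^ 2 := by
  show ψ (PresentedGroup.of 1) = _
  rw [ψ, PresentedGroup.toGroup.of]
  simp

theorem psi_d : ψ (σ 0 * σ 1 * σ 0) = aa := by
  rw [map_mul, map_mul, psi_s0, psi_s1]
  group

theorem psi_t : ψ (σ 0 * σ 1) = bb := by
  rw [map_mul, psi_s0, psi_s1]
  group

theorem psi_surj : Function.Surjective ψ := by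
  intro x
  induction x using CoprodI.induction_on with
  | one => exact ⟨1, map_one ψ⟩
  | of i m =>
    fin_cases i
    · have hm : m = 1 ∨ m = x0 := by revert m; decide
      rcases hm with rfl | rfl
      · exact ⟨1, by rw [map_one, map_one]⟩
      · exact ⟨σ 0 * σ 1 * σ 0, psi_d⟩
    · have hm : m = 1 ∨ m = x1 ∨ m = x1 * x1 := by revert m; decide
      rcases hm with rfl | rfl | rfl
      · exact ⟨1, by rw [map_one, map_one]⟩
      · exact ⟨σ 0 * σ 1, psi_t⟩
      · refine ⟨(σ 0 * σ 1) ^ 2, ?_⟩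
        rw [map_pow, psi_t, bb, pow_two, ← map_mul]
  | mul x y hx hy =>
    obtain ⟨u, rfl⟩ := hx
    obtain ⟨v, rfl⟩ := hy
    exact ⟨u * v, map_mul ψ u v⟩

/-! ### The quotient `B₃ ⧸ ⟨Δ²⟩` and the map `φ : C₂ * C₃ → B₃ ⧸ ⟨Δ²⟩` -/

instance dsqNormal : (Subgroup.zpowers Δsq).Normal := by
  constructor
  intro n hn g
  obtain ⟨k, rfl⟩ := Subgroup.mem_zpowers_iff.1 hn
  have hcen : Δsq ^ k ∈ Subgroup.center BraidGroup3 :=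
    (Subgroup.center BraidGroup3).zpow_mem dsq_central k
  have hcomm : g * Δsq ^ k = Δsq ^ k * g := Subgroup.mem_center_iff.1 hcen g
  have h : g * Δsq ^ k * g⁻¹ = Δsq ^ k := by rw [hcomm]; group
  rw [h]
  exact Subgroup.zpow_mem _ (Subgroup.mem_zpowers _) k

def s : BraidGroup3 ⧸ Subgroup.zpowers Δsq :=
  QuotientGroup.mk' (Subgroup.zpowers Δsq) (σ 0 * σ 1 * σ 0)

def t : BraidGroup3 ⧸ Subgroup.zpowers Δsq :=
  QuotientGroup.mk' (Subgroup.zpowers Δsq) (σ 0 * σ 1)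

theorem hs : s ^ ((2 : ℕ) : ℤ) = 1 := by
  rw [zpow_natCast, s, ← map_pow]
  have h : (σ 0 * σ 1 * σ 0) ^ 2 = Δsq := by rw [pow_two, ← dsq_eq]
  rw [h]
  exact (QuotientGroup.eq_one_iff _).2 (Subgroup.mem_zpowers _)

theorem ht : t ^ ((3 : ℕ) : ℤ) = 1 := by
  rw [zpow_natCast, t, ← map_pow]
  have h : (σ 0 * σ 1) ^ 3 = Δsq := rfl
  rw [h]
  exact (QuotientGroup.eq_one_iff _).2 (Subgroup.mem_zpowers _)

def famQ : ∀ i : Fin 2, Fac i →* BraidGroup3 ⧸ Subgroup.zpowers Δsq := fun i =>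
  match i with
  | 0 => powHom 2 s hs
  | 1 => powHom 3 t ht

def φ : CoprodI Fac →* BraidGroup3 ⧸ Subgroup.zpowers Δsq := CoprodI.lift famQ

theorem phi_a : φ aa = s := by
  rw [φ, aa, CoprodI.lift_of]
  exact powHom_apply_one 2 s hs

theorem phi_b : φ bb = t := by
  rw [φ, bb, CoprodI.lift_of]
  exact powHom_apply_one 3 t ht

theorem hφψ : φ.comp ψ = QuotientGroup.mk' (Subgroup.zpowers Δsq) := by
  apply PresentedGroup.ext
  intro x
  fin_cases x
  · show φ (ψ (σ 0)) = QuotientGroup.mk' (Subgroup.zpowers Δsq) (σ 0)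
    rw [psi_s0, map_mul, map_inv, phi_a, phi_b, s, t, ← map_inv, ← map_mul]
    apply congrArg
    group
  · show φ (ψ (σ 1)) = QuotientGroup.mk' (Subgroup.zpowers Δsq) (σ 1)
    rw [psi_s1, map_mul, map_inv, map_pow, phi_a, phi_b, s, t, ← map_inv, ← map_pow, ← map_mul]
    apply congrArg
    rw [pow_two]
    group

theorem center_le : Subgroup.center BraidGroup3 ≤ Subgroup.zpowers Δsq := by
  intro z hz
  have hzc := Subgroup.mem_center_iff.1 hz
  have h1 : ψ z = 1 := by
    apply coprod_center_eq_one h3fac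
    intro g
    obtain ⟨w, rfl⟩ := psi_surj g
    rw [← map_mul, ← map_mul, hzc w]
  have h2 := DFunLike.congr_fun hφψ z
  rw [MonoidHom.comp_apply, h1, map_one] at h2
  exact (QuotientGroup.eq_one_iff z).1 h2.symm

end BraidCenterAux

/-- The center of `B₃` is generated by the full twist `Δ² = (σ₁σ₂)³`, which has
infinite order. -/
theorem center_braidGroup3 :
    Subgroup.center BraidGroup3 = Subgroup.zpowers Δsq ∧ ¬ IsOfFinOrder Δsq := by
  exact ⟨le_antisymm BraidCenterAux.center_le
    (Subgroup.zpowers_le.2 BraidCenterAux.dsq_central), BraidCenterAux.not_fin⟩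
end

section
/- The homomorphism π : B₃ → Equiv.Perm (Fin 3) is surjective, and its kernel P₃ is generated, as a subgroup of B₃, by the three elements σ₁², σ₂², and Δ² = (σ₁σ₂)³. -/
/-- The transpositions `(0 1)` and `(1 2)` in the symmetric group `S₃`. -/
def permGen : Fin 2 → Equiv.Perm (Fin 3) := ![Equiv.swap 0 1, Equiv.swap 1 2]

lemma permGen_rel : ∀ r ∈ braidRel3, FreeGroup.lift permGen r = 1 := by
  intro r hr
  rw [braidRel3, Set.mem_singleton_iff] at hr
  subst hr
  simp only [map_mul, map_inv, FreeGroup.lift_apply_of]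
  decide

/-- The projection `π : B₃ → S₃` sending `σ₁ ↦ (0 1)` and `σ₂ ↦ (1 2)`. -/
def πB3 : BraidGroup3 →* Equiv.Perm (Fin 3) := PresentedGroup.toGroup permGen_rel

lemma braid : σ 0 * σ 1 * σ 0 = σ 1 * σ 0 * σ 1 := by
  have h : PresentedGroup.mk braidRel3 (FreeGroup.of 0 * FreeGroup.of 1 * FreeGroup.of 0 *
      (FreeGroup.of 1)⁻¹ * (FreeGroup.of 0)⁻¹ * (FreeGroup.of 1)⁻¹) = 1 := by
    apply (QuotientGroup.eq_one_iff _).2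
    exact Subgroup.subset_normalClosure rfl
  simp only [map_mul, map_inv] at h
  rw [show PresentedGroup.mk braidRel3 (FreeGroup.of 0) = σ 0 from rfl,
      show PresentedGroup.mk braidRel3 (FreeGroup.of 1) = σ 1 from rfl] at h
  rw [← mul_inv_eq_one, ← h]
  group

lemma πσ (i : Fin 2) : πB3 (σ i) = permGen i := PresentedGroup.toGroup.of permGen_rel

def Haux : Subgroup BraidGroup3 := Subgroup.closure {σ 0 ^ 2, σ 1 ^ 2, Δsq}

def rep (p : Equiv.Perm (Fin 3)) : BraidGroup3 :=
  if p = 1 then 1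
  else if p = Equiv.swap 0 1 then σ 0
  else if p = Equiv.swap 1 2 then σ 1
  else if p = Equiv.swap 0 1 * Equiv.swap 1 2 then σ 0 * σ 1
  else if p = Equiv.swap 1 2 * Equiv.swap 0 1 then σ 1 * σ 0
  else σ 0 * σ 1 * σ 0

lemma rep_one : rep 1 = 1 := if_pos rfl
lemma rep_2 : rep (Equiv.swap 0 1) = σ 0 := by
  rw [rep, if_neg (by decide), if_pos rfl]
lemma rep_3 : rep (Equiv.swap 1 2) = σ 1 := by
  rw [rep, if_neg (by decide), if_neg (by decide), if_pos rfl]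
lemma rep_4 : rep (Equiv.swap 0 1 * Equiv.swap 1 2) = σ 0 * σ 1 := by
  rw [rep, if_neg (by decide), if_neg (by decide), if_neg (by decide), if_pos rfl]
lemma rep_5 : rep (Equiv.swap 1 2 * Equiv.swap 0 1) = σ 1 * σ 0 := by
  rw [rep, if_neg (by decide), if_neg (by decide), if_neg (by decide), if_neg (by decide),
    if_pos rfl]
lemma rep_6 : rep (Equiv.swap 0 1 * Equiv.swap 1 2 * Equiv.swap 0 1) = σ 0 * σ 1 * σ 0 := by
  rw [rep, if_neg (by decide), if_neg (by decide), if_neg (by decide), if_neg (by decide),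
    if_neg (by decide)]

lemma perm3_cases (p : Equiv.Perm (Fin 3)) :
    p = 1 ∨ p = Equiv.swap 0 1 ∨ p = Equiv.swap 1 2 ∨
    p = Equiv.swap 0 1 * Equiv.swap 1 2 ∨ p = Equiv.swap 1 2 * Equiv.swap 0 1 ∨
    p = Equiv.swap 0 1 * Equiv.swap 1 2 * Equiv.swap 0 1 := by
  revert p; decide

lemma rep_spec (p : Equiv.Perm (Fin 3)) : πB3 (rep p) = p := by
  rcases perm3_cases p with rfl|rfl|rfl|rfl|rfl|rfl <;>
    simp [rep_one, rep_2, rep_3, rep_4, rep_5, rep_6, πσ, permGen]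

lemma key_Δ : Δsq = (σ 0 * σ 1 * σ 0) * (σ 0 * σ 1 * σ 0) := by
  unfold Δsq
  calc (σ 0 * σ 1) ^ 3 = (σ 0 * σ 1 * σ 0) * (σ 1 * σ 0 * σ 1) := by rw [pow_succ, pow_succ, pow_one]; group
  _ = (σ 0 * σ 1 * σ 0) * (σ 0 * σ 1 * σ 0) := by rw [braid]

lemma E8 : (σ 0 * σ 1) * σ 1 * (σ 0)⁻¹ = (σ 1 ^ 2)⁻¹ * Δsq * (σ 0 ^ 2)⁻¹ := by
  calc (σ 0 * σ 1) * σ 1 * (σ 0)⁻¹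
      = (σ 1 ^ 2)⁻¹ * (σ 1 * (σ 1 * σ 0 * σ 1) * σ 1 * σ 0) * (σ 0 ^ 2)⁻¹ := by group
  _ = (σ 1 ^ 2)⁻¹ * (σ 1 * (σ 0 * σ 1 * σ 0) * σ 1 * σ 0) * (σ 0 ^ 2)⁻¹ := by rw [braid]
  _ = (σ 1 ^ 2)⁻¹ * ((σ 1 * σ 0 * σ 1) * (σ 0 * σ 1 * σ 0)) * (σ 0 ^ 2)⁻¹ := by group
  _ = (σ 1 ^ 2)⁻¹ * ((σ 0 * σ 1 * σ 0) * (σ 0 * σ 1 * σ 0)) * (σ 0 ^ 2)⁻¹ := by rw [braid]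
  _ = (σ 1 ^ 2)⁻¹ * Δsq * (σ 0 ^ 2)⁻¹ := by rw [key_Δ]

lemma E9 : (σ 1 * σ 0) * σ 0 * (σ 1)⁻¹ = (σ 0 ^ 2)⁻¹ * Δsq * (σ 1 ^ 2)⁻¹ := by
  calc (σ 1 * σ 0) * σ 0 * (σ 1)⁻¹
      = (σ 0 ^ 2)⁻¹ * (σ 0 * (σ 0 * σ 1 * σ 0) * σ 0 * σ 1) * (σ 1 ^ 2)⁻¹ := by group
  _ = (σ 0 ^ 2)⁻¹ * (σ 0 * (σ 1 * σ 0 * σ 1) * σ 0 * σ 1) * (σ 1 ^ 2)⁻¹ := by rw [braid]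
  _ = (σ 0 ^ 2)⁻¹ * Δsq * (σ 1 ^ 2)⁻¹ := by
        rw [show Δsq = σ 0 * (σ 1 * σ 0 * σ 1) * σ 0 * σ 1 from by unfold Δsq; rw [pow_succ, pow_succ, pow_one]; group]

lemma E11 : (σ 0 * σ 1 * σ 0) * σ 0 * (σ 0 * σ 1)⁻¹ = σ 1 ^ 2 := by
  calc (σ 0 * σ 1 * σ 0) * σ 0 * (σ 0 * σ 1)⁻¹
      = (σ 1 * σ 0 * σ 1) * σ 0 * (σ 0 * σ 1)⁻¹ := by rw [braid]
  _ = σ 1 * ((σ 0 * σ 1 * σ 0) * (σ 0 * σ 1)⁻¹) := by group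
  _ = σ 1 * ((σ 1 * σ 0 * σ 1) * (σ 0 * σ 1)⁻¹) := by rw [braid]
  _ = σ 1 ^ 2 := by rw [pow_two]; group

lemma E12 : (σ 0 * σ 1 * σ 0) * σ 1 * (σ 1 * σ 0)⁻¹ = σ 0 ^ 2 := by
  calc (σ 0 * σ 1 * σ 0) * σ 1 * (σ 1 * σ 0)⁻¹
      = σ 0 * ((σ 1 * σ 0 * σ 1) * (σ 1 * σ 0)⁻¹) := by group
  _ = σ 0 * ((σ 0 * σ 1 * σ 0) * (σ 1 * σ 0)⁻¹) := by rw [braid]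
  _ = σ 0 ^ 2 := by rw [pow_two]; group

lemma ha2 : σ 0 ^ 2 ∈ Haux := Subgroup.subset_closure (by simp)
lemma hb2 : σ 1 ^ 2 ∈ Haux := Subgroup.subset_closure (by simp)
lemma hΔ : Δsq ∈ Haux := Subgroup.subset_closure (by simp)

lemma L (p : Equiv.Perm (Fin 3)) (i : Fin 2) :
    rep p * σ i * (rep (p * permGen i))⁻¹ ∈ Haux := by
  have e0 : permGen 0 = Equiv.swap 0 1 := rfl
  have e1 : permGen 1 = Equiv.swap 1 2 := rfl
  rcases perm3_cases p with rfl|rfl|rfl|rfl|rfl|rfl <;>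
    obtain rfl | rfl : i = 0 ∨ i = 1 := by revert i; decide
  · rw [show (1 : Equiv.Perm (Fin 3)) * permGen 0 = Equiv.swap 0 1 from by decide,
      rep_one, rep_2, show (1 : BraidGroup3) * σ 0 * (σ 0)⁻¹ = 1 from by group]
    exact one_mem _
  · rw [show (1 : Equiv.Perm (Fin 3)) * permGen 1 = Equiv.swap 1 2 from by decide,
      rep_one, rep_3, show (1 : BraidGroup3) * σ 1 * (σ 1)⁻¹ = 1 from by group]
    exact one_mem _
  · rw [show Equiv.swap 0 1 * permGen 0 = (1 : Equiv.Perm (Fin 3)) from by decide,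
      rep_one, rep_2, show σ 0 * σ 0 * (1 : BraidGroup3)⁻¹ = σ 0 ^ 2 from by rw [pow_two]; group]
    exact ha2
  · rw [show Equiv.swap 0 1 * permGen 1 = Equiv.swap 0 1 * Equiv.swap 1 2 from by decide,
      rep_2, rep_4, show σ 0 * σ 1 * (σ 0 * σ 1)⁻¹ = 1 from by group]
    exact one_mem _
  · rw [show Equiv.swap 1 2 * permGen 0 = Equiv.swap 1 2 * Equiv.swap 0 1 from by decide,
      rep_3, rep_5, show σ 1 * σ 0 * (σ 1 * σ 0)⁻¹ = 1 from by group]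
    exact one_mem _
  · rw [show Equiv.swap 1 2 * permGen 1 = (1 : Equiv.Perm (Fin 3)) from by decide,
      rep_one, rep_3, show σ 1 * σ 1 * (1 : BraidGroup3)⁻¹ = σ 1 ^ 2 from by rw [pow_two]; group]
    exact hb2
  · rw [show Equiv.swap 0 1 * Equiv.swap 1 2 * permGen 0 =
        Equiv.swap 0 1 * Equiv.swap 1 2 * Equiv.swap 0 1 from by decide,
      rep_4, rep_6, show (σ 0 * σ 1) * σ 0 * (σ 0 * σ 1 * σ 0)⁻¹ = 1 from by group]
    exact one_mem _
  · rw [show Equiv.swap 0 1 * Equiv.swap 1 2 * permGen 1 = Equiv.swap 0 1 from by decide,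
      rep_4, rep_2, E8]
    exact mul_mem (mul_mem (inv_mem hb2) hΔ) (inv_mem ha2)
  · rw [show Equiv.swap 1 2 * Equiv.swap 0 1 * permGen 0 = Equiv.swap 1 2 from by decide,
      rep_5, rep_3, E9]
    exact mul_mem (mul_mem (inv_mem ha2) hΔ) (inv_mem hb2)
  · rw [show Equiv.swap 1 2 * Equiv.swap 0 1 * permGen 1 =
        Equiv.swap 0 1 * Equiv.swap 1 2 * Equiv.swap 0 1 from by decide,
      rep_5, rep_6, show (σ 1 * σ 0) * σ 1 * (σ 0 * σ 1 * σ 0)⁻¹ = 1 from by rw [braid]; group]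
    exact one_mem _
  · rw [show Equiv.swap 0 1 * Equiv.swap 1 2 * Equiv.swap 0 1 * permGen 0 =
        Equiv.swap 0 1 * Equiv.swap 1 2 from by decide,
      rep_6, rep_4, E11]
    exact hb2
  · rw [show Equiv.swap 0 1 * Equiv.swap 1 2 * Equiv.swap 0 1 * permGen 1 =
        Equiv.swap 1 2 * Equiv.swap 0 1 from by decide,
      rep_6, rep_5, E12]
    exact ha2

lemma key (g : BraidGroup3) : g * (rep (πB3 g))⁻¹ ∈ Haux := by
  have hg : g ∈ Subgroup.closure (Set.range (σ : Fin 2 → BraidGroup3)) := by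
    have h : Set.range (σ : Fin 2 → BraidGroup3) =
        Set.range (PresentedGroup.of : Fin 2 → BraidGroup3) := rfl
    rw [h, PresentedGroup.closure_range_of]
    exact Subgroup.mem_top g
  induction hg using Subgroup.closure_induction_right with
  | one => rw [map_one, rep_one]; simpa using one_mem Haux
  | mul_right x hx y hy ih =>
    obtain ⟨i, rfl⟩ := hy
    rw [map_mul, πσ, show x * σ i * (rep (πB3 x * permGen i))⁻¹ =
      (x * (rep (πB3 x))⁻¹) * (rep (πB3 x) * σ i * (rep (πB3 x * permGen i))⁻¹) from by group]
    exact mul_mem ih (L _ i)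
  | mul_inv_cancel x hx y hy ih =>
    obtain ⟨i, rfl⟩ := hy
    have hinv : (permGen i)⁻¹ = permGen i := by revert i; decide
    have hsq : πB3 x * permGen i * permGen i = πB3 x := by
      rw [mul_assoc, show permGen i * permGen i = 1 from by revert i; decide, mul_one]
    have hmem := L (πB3 x * permGen i) i
    rw [hsq] at hmem
    rw [map_mul, map_inv, πσ, hinv, show x * (σ i)⁻¹ * (rep (πB3 x * permGen i))⁻¹ =
      (x * (rep (πB3 x))⁻¹) * (rep (πB3 x * permGen i) * σ i * (rep (πB3 x))⁻¹)⁻¹ from by group]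
    exact mul_mem ih (inv_mem hmem)

/-- `π : B₃ → S₃` is surjective and its kernel `P₃` is generated by
`σ₁²`, `σ₂²` and `Δ² = (σ₁σ₂)³`. -/
theorem surjective_and_ker_eq_closure :
    Function.Surjective πB3 ∧
      πB3.ker = Subgroup.closure {σ 0 ^ 2, σ 1 ^ 2, Δsq} := by
  constructor
  · exact fun p => ⟨rep p, rep_spec p⟩
  · apply le_antisymm
    · intro g hg
      have h := key g
      rw [MonoidHom.mem_ker] at hg
      rw [hg, rep_one, inv_one, mul_one] at h
      exact h
    · rw [Subgroup.closure_le]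
      intro x hx
      simp only [Set.mem_insert_iff, Set.mem_singleton_iff] at hx
      rcases hx with rfl | rfl | rfl
      · rw [SetLike.mem_coe, MonoidHom.mem_ker, map_pow, πσ]; decide
      · rw [SetLike.mem_coe, MonoidHom.mem_ker, map_pow, πσ]; decide
      · rw [SetLike.mem_coe, MonoidHom.mem_ker]
        unfold Δsq
        rw [map_pow, map_mul, πσ, πσ]; decide
end

section
/- The group homomorphism from the free group on two generators FreeGroup (Fin 2) to B₃ determined by sending the first generator to σ₁² and the second generator to σ₂² is injective; that is, σ₁² and σ₂² generate a free subgroup of rank 2 in B₃. -/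
open Matrix MatrixGroups ModularGroup Complex
open UpperHalfPlane hiding σ

/-- The matrix `U = [[1,0],[-1,1]]`. -/
def Umat : SL(2, ℤ) := ⟨!![1, 0; -1, 1], by norm_num [Matrix.det_fin_two_of]⟩

lemma coe_Umat : (Umat : Matrix (Fin 2) (Fin 2) ℤ) = !![1, 0; -1, 1] := rfl

lemma braid_TU : T * Umat * T * Umat⁻¹ * T⁻¹ * Umat⁻¹ = 1 := by
  have h : T * Umat * T = Umat * T * Umat := by
    ext i j
    fin_cases i <;> fin_cases j <;>
      simp [coe_Umat, coe_T, Matrix.SpecialLinearGroup.coe_mul, Matrix.mul_apply, Fin.sum_univ_succ]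
  rw [h]
  group

lemma key_SU : S * Umat ^ 2 = T ^ (2:ℤ) * S := by
  ext i j
  fin_cases i <;> fin_cases j <;>
    simp [coe_Umat, coe_T_zpow, coe_S, Matrix.SpecialLinearGroup.coe_pow, pow_two, Matrix.mul_apply, Fin.sum_univ_succ]

lemma key_SU' : S * (Umat ^ 2)⁻¹ = T ^ (-2:ℤ) * S := by
  apply mul_right_cancel (b := Umat ^ 2)
  rw [mul_assoc, inv_mul_cancel, mul_one, mul_assoc, key_SU, ← mul_assoc, ← _root_.zpow_add]
  norm_num

lemma S_smul_re (z : ℍ) : (S • z).re = -z.re / Complex.normSq (z : ℂ) := by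
  rw [modular_S_smul]
  simp [Complex.inv_re, Complex.normSq_neg, neg_div]

lemma re_lt_sq (z : ℍ) : z.re ^ 2 < Complex.normSq (z : ℂ) := by
  simp only [Complex.normSq_apply, UpperHalfPlane.coe_re]
  nlinarith [z.im_pos, UpperHalfPlane.coe_im z]

lemma mem_X1 (z : ℍ) (h : 1 ≤ (S • z).re) : -1 < z.re ∧ z.re < 0 := by
  rw [S_smul_re] at h
  have hn : 0 < Complex.normSq (z : ℂ) := normSq_pos.2 (UpperHalfPlane.ne_zero z)
  have h2 := re_lt_sq z
  have h3 : Complex.normSq (z:ℂ) ≤ -z.re := by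
    rw [le_div_iff₀ hn, one_mul] at h; linarith
  constructor <;> nlinarith

lemma mem_Y1 (z : ℍ) (h : (S • z).re ≤ -1) : 0 < z.re ∧ z.re < 1 := by
  rw [S_smul_re] at h
  have hn : 0 < Complex.normSq (z : ℂ) := normSq_pos.2 (UpperHalfPlane.ne_zero z)
  have h2 := re_lt_sq z
  have h3 : Complex.normSq (z:ℂ) ≤ z.re := by
    rw [div_le_iff₀ hn] at h; nlinarith
  constructor <;> nlinarith

lemma T_sq_smul_re (z : ℍ) : (T ^ (2:ℤ) • z).re = 2 + z.re := by
  rw [modular_T_zpow_smul, vadd_re]; norm_num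

lemma T_negsq_smul_re (z : ℍ) : (T ^ (-2:ℤ) • z).re = -2 + z.re := by
  rw [modular_T_zpow_smul, vadd_re]; norm_num

lemma U_sq_smul_re (z : ℍ) : (S • (Umat ^ 2 • z)).re = 2 + (S • z).re := by
  rw [← mul_smul, key_SU, mul_smul, T_sq_smul_re]

lemma U_negsq_smul_re (z : ℍ) : (S • ((Umat ^ 2)⁻¹ • z)).re = -2 + (S • z).re := by
  rw [← mul_smul, key_SU', mul_smul, T_negsq_smul_re]

/-- Ping-pong sets `X`. -/
def Xs : Fin 2 → Set ℍ := ![{z | 1 ≤ z.re}, {z | 1 ≤ (S • z).re}]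

/-- Ping-pong sets `Y`. -/
def Ys : Fin 2 → Set ℍ := ![{z | z.re ≤ -1}, {z | (S • z).re ≤ -1}]

lemma hT2 : (T ^ 2 : SL(2,ℤ)) = T ^ (2:ℤ) := by norm_cast

lemma hT2' : ((T ^ 2 : SL(2,ℤ)))⁻¹ = T ^ (-2:ℤ) := by
  rw [hT2, ← _root_.zpow_neg]

/-- `T²` and `U²` generate a free group, by the ping-pong lemma. -/
lemma injective_lift_TU : Function.Injective
    (FreeGroup.lift ![T ^ 2, Umat ^ 2] : FreeGroup (Fin 2) →* SL(2,ℤ)) := by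
  apply FreeGroup.injective_lift_of_ping_pong ![T ^ 2, Umat ^ 2] Xs Ys
  · -- nonempty
    intro i
    fin_cases i
    · refine ⟨UpperHalfPlane.mk ⟨1,1⟩ one_pos, ?_⟩
      show (1:ℝ) ≤ (UpperHalfPlane.mk ⟨1,1⟩ one_pos).re
      rw [UpperHalfPlane.mk_re]
    · refine ⟨UpperHalfPlane.mk ⟨-(1/2), 1/4⟩ (by norm_num), ?_⟩
      show (1:ℝ) ≤ (S • UpperHalfPlane.mk ⟨-(1/2), 1/4⟩ (by norm_num)).re
      rw [S_smul_re]
      show (1:ℝ) ≤ -(Complex.mk (-(1/2)) (1/4)).re / Complex.normSq (Complex.mk (-(1/2)) (1/4))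
      rw [Complex.normSq_mk]
      norm_num
  · -- Xs pairwise disjoint
    intro i j hij
    fin_cases i <;> fin_cases j
    · exact absurd rfl hij
    · refine Set.disjoint_left.2 fun z hz hz' => ?_
      have h1 : (1:ℝ) ≤ z.re := hz
      have h2 := mem_X1 z hz'
      linarith [h2.2]
    · refine Set.disjoint_left.2 fun z hz hz' => ?_
      have h1 : (1:ℝ) ≤ z.re := hz'
      have h2 := mem_X1 z hz
      linarith [h2.2]
    · exact absurd rfl hij
  · -- Ys pairwise disjoint
    intro i j hij
    fin_cases i <;> fin_cases j
    · exact absurd rfl hij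
    · refine Set.disjoint_left.2 fun z hz hz' => ?_
      have h1 : z.re ≤ -1 := hz
      have h2 := mem_Y1 z hz'
      linarith [h2.1]
    · refine Set.disjoint_left.2 fun z hz hz' => ?_
      have h1 : z.re ≤ -1 := hz'
      have h2 := mem_Y1 z hz
      linarith [h2.1]
    · exact absurd rfl hij
  · -- Xs i disjoint Ys j
    intro i j
    fin_cases i <;> fin_cases j
    · refine Set.disjoint_left.2 fun z hz hz' => ?_
      have h1 : (1:ℝ) ≤ z.re := hz
      have h2 : z.re ≤ -1 := hz'
      linarith
    · refine Set.disjoint_left.2 fun z hz hz' => ?_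
      have h1 : (1:ℝ) ≤ z.re := hz
      have h2 := mem_Y1 z hz'
      linarith [h2.2]
    · refine Set.disjoint_left.2 fun z hz hz' => ?_
      have h1 := mem_X1 z hz
      have h2 : z.re ≤ -1 := hz'
      linarith [h1.1]
    · refine Set.disjoint_left.2 fun z hz hz' => ?_
      have h1 : (1:ℝ) ≤ (S • z).re := hz
      have h2 : (S • z).re ≤ -1 := hz'
      linarith
  · -- hX
    intro i
    fin_cases i
    · rintro _ ⟨z, hz, rfl⟩
      have h1 : ¬ (z.re ≤ -1) := hz
      show (1:ℝ) ≤ ((T ^ 2 : SL(2,ℤ)) • z).re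
      rw [hT2, T_sq_smul_re]
      linarith
    · rintro _ ⟨z, hz, rfl⟩
      have h1 : ¬ ((S • z).re ≤ -1) := hz
      show (1:ℝ) ≤ (S • ((Umat ^ 2 : SL(2,ℤ)) • z)).re
      rw [U_sq_smul_re]
      linarith
  · -- hY
    intro i
    fin_cases i
    · rintro _ ⟨z, hz, rfl⟩
      have h1 : ¬ ((1:ℝ) ≤ z.re) := hz
      show (((T ^ 2 : SL(2,ℤ)))⁻¹ • z).re ≤ -1
      rw [hT2', T_negsq_smul_re]
      linarith
    · rintro _ ⟨z, hz, rfl⟩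
      have h1 : ¬ ((1:ℝ) ≤ (S • z).re) := hz
      show (S • (((Umat ^ 2 : SL(2,ℤ)))⁻¹ • z)).re ≤ -1
      rw [U_negsq_smul_re]
      linarith

/-- The representation `B₃ → SL(2,ℤ)`, `σ₁ ↦ T`, `σ₂ ↦ U`. -/
def braidRep : BraidGroup3 →* SL(2, ℤ) :=
  PresentedGroup.toGroup (f := ![T, Umat]) (by
    intro r hr
    rw [braidRel3, Set.mem_singleton_iff] at hr
    subst hr
    simp only [_root_.map_mul, map_inv, FreeGroup.lift_apply_of]
    simpa using braid_TU)

/-- `σ₁²` and `σ₂²` generate a free subgroup of rank 2 in `B₃`: the homomorphism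
`F₂ → B₃` sending the free generators to `σ₁²` and `σ₂²` is injective. -/
theorem injective_freeGroup_to_braidGroup3 :
    Function.Injective (FreeGroup.lift ![σ 0 ^ 2, σ 1 ^ 2] : FreeGroup (Fin 2) →* BraidGroup3) := by
  have hcomp : braidRep.comp (FreeGroup.lift ![σ 0 ^ 2, σ 1 ^ 2])
      = (FreeGroup.lift ![T ^ 2, Umat ^ 2] : FreeGroup (Fin 2) →* SL(2,ℤ)) := by
    ext i
    fin_cases i <;>
      simp [σ, braidRep, PresentedGroup.toGroup.of]
  have h := injective_lift_TU
  rw [← hcomp] at h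
  exact Function.Injective.of_comp h
end

section
/- The center of the pure braid group P₃ = ker π, regarded as a group in its own right, is the cyclic subgroup generated by Δ² = (σ₁σ₂)³ (viewed as an element of P₃). -/
lemma Δsq_mem_ker : Δsq ∈ πB3.ker := by
  rw [MonoidHom.mem_ker]
  simp only [Δsq, σ, πB3, map_pow, map_mul, PresentedGroup.toGroup.of]
  decide


namespace B3Center

open Monoid Multiplicative Subgroup

/-! ### Basic braid group facts -/

lemma braid_rel : σ 0 * σ 1 * σ 0 * (σ 1)⁻¹ * (σ 0)⁻¹ * (σ 1)⁻¹ = 1 := by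
  have h : (FreeGroup.of 0 * FreeGroup.of 1 * FreeGroup.of 0 *
      (FreeGroup.of 1)⁻¹ * (FreeGroup.of 0)⁻¹ * (FreeGroup.of 1)⁻¹ : FreeGroup (Fin 2)) ∈
      Subgroup.normalClosure braidRel3 :=
    Subgroup.subset_normalClosure rfl
  have h2 := (QuotientGroup.eq_one_iff (G := FreeGroup (Fin 2))
    (N := Subgroup.normalClosure braidRel3) _).2 h
  exact h2

lemma braid : σ 0 * σ 1 * σ 0 = σ 1 * σ 0 * σ 1 := by
  have h := braid_rel
  have h2 : (σ 0 * σ 1 * σ 0 * (σ 1)⁻¹ * (σ 0)⁻¹ * (σ 1)⁻¹) * (σ 1 * σ 0 * σ 1)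
      = 1 * (σ 1 * σ 0 * σ 1) := by rw [h]
  simpa [mul_assoc] using h2

/-- The half twist `Δ = σ₁σ₂σ₁`. -/
def Δhalf : BraidGroup3 := σ 0 * σ 1 * σ 0

lemma Δsq_eq : Δsq = Δhalf * Δhalf := by
  have h1 : Δhalf * Δhalf = Δhalf * (σ 1 * σ 0 * σ 1) := by
    rw [Δhalf, braid]
  rw [h1]
  rw [Δsq, Δhalf]
  simp [pow_succ, mul_assoc]

lemma Δhalf_s0 : Δhalf * σ 0 = σ 1 * Δhalf := by
  rw [Δhalf]
  conv_lhs => rw [braid]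
  simp [mul_assoc]

lemma Δhalf_s1 : Δhalf * σ 1 = σ 0 * Δhalf := by
  rw [Δhalf]
  conv_rhs => rw [braid]
  simp [mul_assoc]

lemma Δsq_comm_gen (i : Fin 2) : Δsq * σ i = σ i * Δsq := by
  fin_cases i
  · calc Δsq * σ 0 = Δhalf * (Δhalf * σ 0) := by rw [Δsq_eq, mul_assoc]
    _ = Δhalf * σ 1 * Δhalf := by rw [Δhalf_s0, mul_assoc]
    _ = σ 0 * (Δhalf * Δhalf) := by rw [Δhalf_s1, mul_assoc]
    _ = σ 0 * Δsq := by rw [Δsq_eq]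
  · calc Δsq * σ 1 = Δhalf * (Δhalf * σ 1) := by rw [Δsq_eq, mul_assoc]
    _ = Δhalf * σ 0 * Δhalf := by rw [Δhalf_s1, mul_assoc]
    _ = σ 1 * (Δhalf * Δhalf) := by rw [Δhalf_s0, mul_assoc]
    _ = σ 1 * Δsq := by rw [Δsq_eq]

lemma Δsq_comm (g : BraidGroup3) : Δsq * g = g * Δsq := by
  have hg : g ∈ Subgroup.centralizer {Δsq} := by
    apply PresentedGroup.generated_by
    intro j
    rw [Subgroup.mem_centralizer_iff]
    rintro y rfl
    exact Δsq_comm_gen j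
  exact (Subgroup.mem_centralizer_iff.1 hg) Δsq rfl

end B3Center
namespace B3Center
open Monoid Multiplicative Subgroup

/-! ### The group `K = ⟨a, b | a² = b³⟩` as an amalgamated product (pushout) `ℤ *_ℤ ℤ`. -/

/-- The two maps `ℤ → ℤ` given by multiplication by 2 and 3. -/
def φK : ∀ _ : Bool, Multiplicative ℤ →* Multiplicative ℤ :=
  fun i => zpowersHom (Multiplicative ℤ) (ofAdd (if i then (3 : ℤ) else 2))

lemma φK_injective : ∀ i, Function.Injective (φK i) := by
  intro i x y h
  have h2 : toAdd x * (if i then (3:ℤ) else 2) = toAdd y * (if i then (3:ℤ) else 2) := by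
    have := congrArg toAdd h
    simpa [φK, toAdd_zpow] using this
  have : toAdd x = toAdd y := by
    rcases i with _ | _ <;> simp_all
  simpa using congrArg ofAdd this

/-- The amalgamated product `ℤ *_ℤ ℤ` along multiplication by 2 and 3. -/
abbrev KG : Type := Monoid.PushoutI φK

def ka : KG := Monoid.PushoutI.of (φ := φK) false (ofAdd 1)
def kb : KG := Monoid.PushoutI.of (φ := φK) true (ofAdd 1)
def kz : KG := Monoid.PushoutI.base φK (ofAdd 1)

lemma ka_sq : ka * ka = kz := by
  have h1 : ka * ka = Monoid.PushoutI.of (φ := φK) false (ofAdd 1 * ofAdd 1) := by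
    rw [map_mul]; rfl
  have h2 : (ofAdd (1:ℤ) * ofAdd 1) = φK false (ofAdd 1) := by
    simp [φK, ← ofAdd_add]
  rw [h1, h2, Monoid.PushoutI.of_apply_eq_base φK false (ofAdd 1), kz]

lemma kb_cube : kb * kb * kb = kz := by
  have h1 : kb * kb * kb = Monoid.PushoutI.of (φ := φK) true (ofAdd 1 * ofAdd 1 * ofAdd 1) := by
    rw [map_mul, map_mul]; rfl
  have h2 : (ofAdd (1:ℤ) * ofAdd 1 * ofAdd 1) = φK true (ofAdd 1) := by
    simp [φK, ← ofAdd_add]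
  rw [h1, h2, Monoid.PushoutI.of_apply_eq_base φK true (ofAdd 1), kz]

lemma kz_comm (g : KG) : kz * g = g * kz := by
  induction g using Monoid.PushoutI.induction_on with
  | of i g =>
    have : kz = Monoid.PushoutI.of (φ := φK) i (φK i (ofAdd 1)) := by
      rw [Monoid.PushoutI.of_apply_eq_base φK i (ofAdd 1), kz]
    rw [this, ← map_mul, ← map_mul, mul_comm]
  | base h =>
    rw [kz, ← map_mul, ← map_mul, mul_comm]
  | mul x y hx hy =>
    rw [← mul_assoc, hx, mul_assoc, hy, mul_assoc]

end B3Center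
namespace B3Center
open Monoid Multiplicative Subgroup

/-! ### The isomorphism `B₃ ≃* K` -/

/-- Images of the generators `σ₁, σ₂` in `K`: `σ₁ ↦ b⁻¹a`, `σ₂ ↦ a⁻¹b²`. -/
def fgen : Fin 2 → KG := ![kb⁻¹ * ka, ka⁻¹ * (kb * kb)]

lemma fgen_rel : ∀ r ∈ braidRel3, FreeGroup.lift fgen r = 1 := by
  intro r hr
  rw [braidRel3, Set.mem_singleton_iff] at hr
  subst hr
  simp only [map_mul, map_inv, FreeGroup.lift_apply_of]
  have h0 : fgen 0 = kb⁻¹ * ka := rfl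
  have h1 : fgen 1 = ka⁻¹ * (kb * kb) := rfl
  rw [h0, h1]
  have huvu : (kb⁻¹ * ka) * (ka⁻¹ * (kb * kb)) * (kb⁻¹ * ka) = ka := by
    simp [mul_assoc]
  have hvuv : (ka⁻¹ * (kb * kb)) * (kb⁻¹ * ka) * (ka⁻¹ * (kb * kb)) = ka := by
    have h2 : (ka⁻¹ * (kb * kb)) * (kb⁻¹ * ka) * (ka⁻¹ * (kb * kb))
        = ka⁻¹ * (kb * kb * kb) := by
      simp [mul_assoc]
    rw [h2, kb_cube, ← ka_sq]
    simp [mul_assoc]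
  have key : (kb⁻¹ * ka) * (ka⁻¹ * (kb * kb)) * (kb⁻¹ * ka)
      = (ka⁻¹ * (kb * kb)) * (kb⁻¹ * ka) * (ka⁻¹ * (kb * kb)) := by rw [huvu, hvuv]
  rw [key]
  simp [mul_assoc]

/-- The homomorphism `B₃ → K`. -/
def fB : BraidGroup3 →* KG := PresentedGroup.toGroup fgen_rel

lemma fB_s0 : fB (σ 0) = kb⁻¹ * ka := by
  rw [σ, fB, PresentedGroup.toGroup.of]; rfl

lemma fB_s1 : fB (σ 1) = ka⁻¹ * (kb * kb) := by
  rw [σ, fB, PresentedGroup.toGroup.of]; rfl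

/-- The generator images for the inverse homomorphism `K → B₃`. -/
def ggen : ∀ _ : Bool, Multiplicative ℤ →* BraidGroup3 :=
  fun i => zpowersHom BraidGroup3 (if i then σ 0 * σ 1 else Δhalf)

lemma ggen_comp : ∀ i, (ggen i).comp (φK i) = zpowersHom BraidGroup3 Δsq := by
  intro i
  apply MonoidHom.ext_mint
  rcases i with _ | _
  · show ggen false (φK false (ofAdd 1)) = Δsq ^ ((1:ℤ))
    have h1 : φK false (ofAdd 1) = ofAdd 2 := by simp [φK]
    rw [h1]
    show Δhalf ^ ((2:ℤ)) = Δsq ^ ((1:ℤ))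
    rw [zpow_one, zpow_two, ← Δsq_eq]
  · show ggen true (φK true (ofAdd 1)) = Δsq ^ ((1:ℤ))
    have h1 : φK true (ofAdd 1) = ofAdd 3 := by simp [φK]
    rw [h1]
    show (σ 0 * σ 1) ^ ((3:ℤ)) = Δsq ^ ((1:ℤ))
    rw [zpow_one, Δsq]
    norm_cast

/-- The homomorphism `K → B₃`. -/
def gK : KG →* BraidGroup3 :=
  Monoid.PushoutI.lift ggen (zpowersHom BraidGroup3 Δsq) ggen_comp

lemma gK_ka : gK ka = Δhalf := by
  rw [ka, gK, Monoid.PushoutI.lift_of]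
  show Δhalf ^ ((1:ℤ)) = Δhalf
  exact zpow_one _

lemma gK_kb : gK kb = σ 0 * σ 1 := by
  rw [kb, gK, Monoid.PushoutI.lift_of]
  show (σ 0 * σ 1) ^ ((1:ℤ)) = σ 0 * σ 1
  exact zpow_one _

lemma gK_comp_fB : gK.comp fB = MonoidHom.id BraidGroup3 := by
  apply PresentedGroup.ext
  intro x
  have hx : fB (PresentedGroup.of x) = fgen x := by
    rw [fB, PresentedGroup.toGroup.of]
  rw [MonoidHom.comp_apply, hx, MonoidHom.id_apply]
  fin_cases x
  · show gK (kb⁻¹ * ka) = PresentedGroup.of 0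
    rw [map_mul, map_inv, gK_ka, gK_kb]
    show (σ 0 * σ 1)⁻¹ * (σ 0 * σ 1 * σ 0) = σ 0
    simp [mul_assoc]
  · show gK (ka⁻¹ * (kb * kb)) = PresentedGroup.of 1
    rw [map_mul, map_mul, map_inv, gK_ka, gK_kb]
    show (σ 0 * σ 1 * σ 0)⁻¹ * (σ 0 * σ 1 * (σ 0 * σ 1)) = σ 1
    simp [mul_assoc, mul_inv_rev]

lemma fB_comp_gK : fB.comp gK = MonoidHom.id KG := by
  apply Monoid.PushoutI.hom_ext_nonempty
  intro i
  apply MonoidHom.ext_mint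
  rcases i with _ | _
  · show fB (gK ka) = ka
    rw [gK_ka, Δhalf, map_mul, map_mul, fB_s0, fB_s1]
    simp [mul_assoc]
  · show fB (gK kb) = kb
    rw [gK_kb, map_mul, fB_s0, fB_s1]
    simp [mul_assoc]

/-- The isomorphism `B₃ ≃* K`. -/
def eB : BraidGroup3 ≃* KG := MonoidHom.toMulEquiv fB gK gK_comp_fB fB_comp_gK

lemma fB_Δsq : fB Δsq = kz := by
  have huv : fB (σ 0 * σ 1) = kb := by
    rw [map_mul, fB_s0, fB_s1]
    simp [mul_assoc]
  rw [Δsq, map_pow, huv, ← kb_cube, pow_succ, pow_succ, pow_one]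

end B3Center
namespace B3Center
open Monoid Multiplicative Subgroup

/-! ### Normal form: every element of `K` is `z^n * (reduced word)` -/

lemma exists_decomp (y : KG) :
    ∃ (n : ℤ) (w : Monoid.CoprodI.Word (fun _ : Bool => Multiplicative ℤ)),
      Monoid.PushoutI.Reduced φK w ∧
      y = Monoid.PushoutI.base φK (ofAdd n) * Monoid.PushoutI.ofCoprodI w.prod := by
  classical
  obtain ⟨d⟩ := Monoid.PushoutI.NormalWord.transversal_nonempty φK φK_injective
  set w : Monoid.PushoutI.NormalWord d := Monoid.PushoutI.NormalWord.equiv y with hw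
  have hy : Monoid.PushoutI.NormalWord.prod w = y :=
    (Monoid.PushoutI.NormalWord.equiv (d := d)).symm_apply_apply y
  refine ⟨toAdd w.head, w.toWord, ?_, ?_⟩
  · intro g hg
    rintro ⟨x, hx⟩
    have hne : g.2 ≠ 1 := w.toWord.ne_one g hg
    have hset : g.2 ∈ d.set g.1 := w.normalized g.1 g.2 hg
    have hu := (d.compl g.1).existsUnique g.2
    obtain ⟨p, -, hp⟩ := hu
    have h1 := hp (⟨⟨g.2, ⟨x, hx⟩⟩, ⟨1, d.one_mem g.1⟩⟩) (by simp)
    have h2 := hp (⟨⟨1, Subgroup.one_mem _⟩, ⟨g.2, hset⟩⟩) (by simp)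
    rw [← h2] at h1
    have := congrArg (fun q => ((q.1 : Multiplicative ℤ), (q.2 : Multiplicative ℤ))) h1
    simp only [Prod.mk.injEq] at this
    exact hne (this.1.symm ▸ rfl)
  · rw [← hy, Monoid.PushoutI.NormalWord.prod]
    simp

end B3Center
namespace B3Center
open Monoid Multiplicative Subgroup Matrix MatrixGroups

/-! ### `PSL₂(ℤ)` and the relevant matrices -/

/-- The subgroup `{±1}` of `SL(2,ℤ)`. -/
def pmOne : Subgroup SL(2,ℤ) := Subgroup.zpowers (-1)

instance pmOne_normal : pmOne.Normal := by
  constructor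
  rintro x hx g
  obtain ⟨k, rfl⟩ := Subgroup.mem_zpowers_iff.1 hx
  have hc : Commute ((-1 : SL(2,ℤ)) ^ k) g := (Commute.neg_one_left g).zpow_left k
  have : g * (-1 : SL(2,ℤ)) ^ k * g⁻¹ = (-1) ^ k := by
    rw [hc.symm.eq, mul_assoc]
    simp
  rw [this]
  exact Subgroup.mem_zpowers_iff.2 ⟨k, rfl⟩

/-- `PSL₂(ℤ)`. -/
abbrev PSL2Z : Type := SL(2,ℤ) ⧸ pmOne

def mkP : SL(2,ℤ) →* PSL2Z := QuotientGroup.mk' pmOne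

lemma neg_one_sq_SL : ((-1 : SL(2,ℤ)) * (-1)) = 1 := by simp

lemma mem_pmOne_iff {x : SL(2,ℤ)} : x ∈ pmOne ↔ x = 1 ∨ x = -1 := by
  constructor
  · rintro hx
    obtain ⟨k, rfl⟩ := Subgroup.mem_zpowers_iff.1 hx
    rcases Int.even_or_odd k with he | ho
    · left; exact he.neg_one_zpow
    · right
      obtain ⟨m, rfl⟩ := ho
      rw [_root_.zpow_add, zpow_one, Even.neg_one_zpow (even_two_mul m), one_mul]
  · rintro (rfl | rfl)
    · exact Subgroup.one_mem _
    · exact Subgroup.mem_zpowers _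

lemma mkP_eq_one_iff {x : SL(2,ℤ)} : mkP x = 1 ↔ x = 1 ∨ x = -1 := by
  rw [mkP, QuotientGroup.mk'_apply, QuotientGroup.eq_one_iff, mem_pmOne_iff]

def Smat : SL(2,ℤ) := ⟨!![0,-1;1,0], by norm_num [Matrix.det_fin_two_of]⟩
def Rmat : SL(2,ℤ) := ⟨!![0,1;-1,1], by norm_num [Matrix.det_fin_two_of]⟩
def Tmat : SL(2,ℤ) := ⟨!![1,1;0,1], by norm_num [Matrix.det_fin_two_of]⟩
def Lmat : SL(2,ℤ) := ⟨!![1,0;-1,1], by norm_num [Matrix.det_fin_two_of]⟩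
def T2mat : SL(2,ℤ) := ⟨!![1,2;0,1], by norm_num [Matrix.det_fin_two_of]⟩
def L2mat : SL(2,ℤ) := ⟨!![1,0;-2,1], by norm_num [Matrix.det_fin_two_of]⟩

lemma Smat_sq : Smat * Smat = -1 := by
  ext i j
  rw [Matrix.SpecialLinearGroup.coe_mul]
  fin_cases i <;> fin_cases j <;>
    simp [Smat, Matrix.mul_apply, Fin.sum_univ_two]

lemma Rmat_sq : Rmat * Rmat = ⟨!![-1,1;-1,0], by norm_num [Matrix.det_fin_two_of]⟩ := by
  ext i j
  rw [Matrix.SpecialLinearGroup.coe_mul]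
  fin_cases i <;> fin_cases j <;>
    simp [Rmat, Matrix.mul_apply, Fin.sum_univ_two]

lemma Rmat_cube : Rmat * Rmat * Rmat = -1 := by
  rw [Rmat_sq]
  ext i j
  erw [Matrix.SpecialLinearGroup.coe_mul]
  fin_cases i <;> fin_cases j <;>
    simp [Rmat, Matrix.mul_apply, Fin.sum_univ_two]

lemma RRS_eq_T : Rmat * Rmat * Smat = Tmat := by
  rw [Rmat_sq]
  ext i j
  erw [Matrix.SpecialLinearGroup.coe_mul]
  fin_cases i <;> fin_cases j <;>
    simp [Rmat, Smat, Tmat, Matrix.mul_apply, Fin.sum_univ_two]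

lemma SRR_eq_L : Smat * (Rmat * Rmat) = Lmat := by
  rw [Rmat_sq]
  ext i j
  erw [Matrix.SpecialLinearGroup.coe_mul]
  fin_cases i <;> fin_cases j <;>
    simp [Rmat, Smat, Lmat, Matrix.mul_apply, Fin.sum_univ_two]

lemma Tmat_sq : Tmat * Tmat = T2mat := by
  ext i j
  rw [Matrix.SpecialLinearGroup.coe_mul]
  fin_cases i <;> fin_cases j <;>
    simp [Tmat, T2mat, Matrix.mul_apply, Fin.sum_univ_two]

lemma Lmat_sq : Lmat * Lmat = L2mat := by
  ext i j
  rw [Matrix.SpecialLinearGroup.coe_mul]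
  fin_cases i <;> fin_cases j <;>
    simp [Lmat, L2mat, Matrix.mul_apply, Fin.sum_univ_two]

lemma Smat_ne_one : Smat ≠ 1 := by
  intro h
  have := congrArg (fun g : SL(2,ℤ) => (g : Matrix (Fin 2) (Fin 2) ℤ) 1 0) h
  simp [Smat] at this

lemma Smat_ne_neg_one : Smat ≠ -1 := by
  intro h
  have := congrArg (fun g : SL(2,ℤ) => (g : Matrix (Fin 2) (Fin 2) ℤ) 1 0) h
  simp [Smat, Matrix.SpecialLinearGroup.coe_neg] at this

lemma Rmat_ne_one : Rmat ≠ 1 := by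
  intro h
  have := congrArg (fun g : SL(2,ℤ) => (g : Matrix (Fin 2) (Fin 2) ℤ) 1 0) h
  simp [Rmat] at this

lemma Rmat_ne_neg_one : Rmat ≠ -1 := by
  intro h
  have := congrArg (fun g : SL(2,ℤ) => (g : Matrix (Fin 2) (Fin 2) ℤ) 0 1) h
  simp [Rmat, Matrix.SpecialLinearGroup.coe_neg] at this

lemma Rsq_ne_one : Rmat * Rmat ≠ 1 := by
  rw [Rmat_sq]
  intro h
  have := congrArg (fun g : SL(2,ℤ) => (g : Matrix (Fin 2) (Fin 2) ℤ) 0 1) h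
  simp at this

lemma Rsq_ne_neg_one : Rmat * Rmat ≠ -1 := by
  rw [Rmat_sq]
  intro h
  have := congrArg (fun g : SL(2,ℤ) => (g : Matrix (Fin 2) (Fin 2) ℤ) 0 1) h
  simp [Matrix.SpecialLinearGroup.coe_neg] at this

/-- The image of `S` in `PSL₂(ℤ)`: an element of order 2. -/
def sP : PSL2Z := mkP Smat
/-- The image of `R` in `PSL₂(ℤ)`: an element of order 3. -/
def rP : PSL2Z := mkP Rmat

lemma sP_sq : sP * sP = 1 := by
  rw [sP, ← _root_.map_mul, Smat_sq, mkP_eq_one_iff]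
  right; rfl

lemma rP_cube : rP * rP * rP = 1 := by
  rw [rP, ← _root_.map_mul, ← _root_.map_mul, Rmat_cube, mkP_eq_one_iff]
  right; rfl

lemma sP_ne_one : sP ≠ 1 := by
  rw [sP, Ne, mkP_eq_one_iff]
  rintro (h | h)
  · exact Smat_ne_one h
  · exact Smat_ne_neg_one h

lemma rP_ne_one : rP ≠ 1 := by
  rw [rP, Ne, mkP_eq_one_iff]
  rintro (h | h)
  · exact Rmat_ne_one h
  · exact Rmat_ne_neg_one h

lemma rP_sq_ne_one : rP * rP ≠ 1 := by
  rw [rP, ← _root_.map_mul, Ne, mkP_eq_one_iff]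
  rintro (h | h)
  · exact Rsq_ne_one h
  · exact Rsq_ne_neg_one h

end B3Center
namespace B3Center
open Monoid Multiplicative Subgroup Matrix MatrixGroups Pointwise

/-! ### The action of `PSL₂(ℤ)` on the projective plane quotient `ℝ²/±` -/

/-- Linear action of `SL(2,ℤ)` on `ℝ²`. -/
def mact (g : SL(2,ℤ)) (v : ℝ × ℝ) : ℝ × ℝ :=
  (((g : Matrix (Fin 2) (Fin 2) ℤ) 0 0 : ℝ) * v.1 + ((g : Matrix (Fin 2) (Fin 2) ℤ) 0 1 : ℝ) * v.2,
   ((g : Matrix (Fin 2) (Fin 2) ℤ) 1 0 : ℝ) * v.1 + ((g : Matrix (Fin 2) (Fin 2) ℤ) 1 1 : ℝ) * v.2)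

lemma mact_one (v : ℝ × ℝ) : mact 1 v = v := by
  simp [mact, Matrix.SpecialLinearGroup.coe_one, Matrix.one_apply]

lemma mact_mul (g h : SL(2,ℤ)) (v : ℝ × ℝ) : mact (g * h) v = mact g (mact h v) := by
  apply Prod.ext <;>
  · simp only [mact, Matrix.SpecialLinearGroup.coe_mul, Matrix.mul_apply, Fin.sum_univ_two]
    push_cast
    ring

lemma mact_neg (g : SL(2,ℤ)) (v : ℝ × ℝ) : mact (-g) v = -(mact g v) := by
  apply Prod.ext <;>
  · simp only [mact, Matrix.SpecialLinearGroup.coe_neg, Matrix.neg_apply, Prod.fst_neg,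
      Prod.snd_neg]
    push_cast
    ring

lemma mact_negv (g : SL(2,ℤ)) (v : ℝ × ℝ) : mact g (-v) = -(mact g v) := by
  apply Prod.ext <;>
  · simp only [mact, Prod.fst_neg, Prod.snd_neg]
    ring

/-- The equivalence relation identifying `v` and `-v` on `ℝ²`. -/
def pmSetoid : Setoid (ℝ × ℝ) :=
  ⟨fun v w => v = w ∨ v = -w, by
    constructor
    · exact fun v => Or.inl rfl
    · rintro v w (rfl | rfl)
      · exact Or.inl rfl
      · exact Or.inr (by simp)
    · rintro u v w (rfl | rfl) (rfl | rfl)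
      · exact Or.inl rfl
      · exact Or.inr rfl
      · exact Or.inr rfl
      · exact Or.inl (by simp)⟩

/-- The plane modulo `±1`. -/
abbrev PlaneQuot : Type := Quotient pmSetoid

lemma mactQ_aux (g : SL(2,ℤ)) : ∀ v w : ℝ × ℝ, pmSetoid.r v w →
    pmSetoid.r (mact g v) (mact g w) := by
  rintro v w (rfl | rfl)
  · exact Or.inl rfl
  · exact Or.inr (by rw [mact_negv])

/-- `SL(2,ℤ)` acting on the quotient plane. -/
def mactQ (g : SL(2,ℤ)) : PlaneQuot → PlaneQuot :=
  Quotient.map (mact g) (mactQ_aux g)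

lemma mactQ_mk (g : SL(2,ℤ)) (v : ℝ × ℝ) : mactQ g ⟦v⟧ = ⟦mact g v⟧ := rfl

/-- `SL(2,ℤ)` homomorphism into permutations of the quotient plane. -/
def permSL : SL(2,ℤ) →* Equiv.Perm PlaneQuot where
  toFun g :=
    { toFun := mactQ g
      invFun := mactQ g⁻¹
      left_inv := by
        intro p
        induction p using Quotient.ind with
        | _ v => rw [mactQ_mk, mactQ_mk, ← mact_mul, inv_mul_cancel, mact_one]
      right_inv := by
        intro p
        induction p using Quotient.ind with
        | _ v => rw [mactQ_mk, mactQ_mk, ← mact_mul, mul_inv_cancel, mact_one] }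
  map_one' := by
    ext p
    induction p using Quotient.ind with
    | _ v => simp [mactQ_mk, mact_one]
  map_mul' g h := by
    ext p
    induction p using Quotient.ind with
    | _ v => simp [mactQ_mk, mact_mul]

lemma permSL_neg_one : permSL (-1) = 1 := by
  ext p
  induction p using Quotient.ind with
  | _ v =>
    show mactQ (-1) ⟦v⟧ = ⟦v⟧
    rw [mactQ_mk]
    refine Quotient.sound (Or.inr ?_)
    rw [mact_neg, mact_one]

/-- The action descends to `PSL₂(ℤ)`. -/
def permPSL : PSL2Z →* Equiv.Perm PlaneQuot :=
  QuotientGroup.lift pmOne permSL (by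
    intro x hx
    rw [mem_pmOne_iff] at hx
    rcases hx with rfl | rfl
    · exact map_one _
    · exact permSL_neg_one)

noncomputable instance : MulAction PSL2Z PlaneQuot := MulAction.compHom _ permPSL

lemma psl_smul (g : SL(2,ℤ)) (v : ℝ × ℝ) :
    (mkP g) • (⟦v⟧ : PlaneQuot) = ⟦mact g v⟧ := rfl

end B3Center
namespace B3Center
open Monoid Multiplicative Subgroup Matrix MatrixGroups Pointwise

/-! ### Ping-pong: the subgroup generated by `sP, rP` is a free product `C₂ * C₃` -/

/-- Elements of a subgroup generated by an element of order dividing 2. -/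
lemma zpowers_order_two {G : Type*} [Group G] {g : G} (hg : g * g = 1) {x : G}
    (hx : x ∈ Subgroup.zpowers g) : x = 1 ∨ x = g := by
  obtain ⟨k, rfl⟩ := Subgroup.mem_zpowers_iff.1 hx
  have hk : 2 * (k / 2) + k % 2 = k := Int.mul_ediv_add_emod k 2
  have h2 : g ^ k = (g ^ (2:ℤ)) ^ (k / 2) * g ^ (k % 2) := by
    rw [← _root_.zpow_mul, ← _root_.zpow_add, hk]
  have h3 : g ^ (2:ℤ) = 1 := by rw [zpow_two, hg]
  have hm : k % 2 = 0 ∨ k % 2 = 1 := by omega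
  rcases hm with hm | hm <;> rw [h2, h3, hm] <;> simp

/-- Elements of a subgroup generated by an element of order dividing 3. -/
lemma zpowers_order_three {G : Type*} [Group G] {g : G} (hg : g * g * g = 1) {x : G}
    (hx : x ∈ Subgroup.zpowers g) : x = 1 ∨ x = g ∨ x = g * g := by
  obtain ⟨k, rfl⟩ := Subgroup.mem_zpowers_iff.1 hx
  have hk : 3 * (k / 3) + k % 3 = k := Int.mul_ediv_add_emod k 3
  have h2 : g ^ k = (g ^ (3:ℤ)) ^ (k / 3) * g ^ (k % 3) := by
    rw [← _root_.zpow_mul, ← _root_.zpow_add, hk]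
  have h3 : g ^ (3:ℤ) = 1 := by
    show g ^ ((3:ℕ) : ℤ) = 1
    rw [zpow_natCast, pow_succ, pow_two, hg]
  have hm : k % 3 = 0 ∨ k % 3 = 1 ∨ k % 3 = 2 := by omega
  rcases hm with hm | hm | hm <;> rw [h2, h3, hm]
  · simp
  · simp
  · right; right
    rw [_root_.one_zpow, one_mul, _root_.zpow_two]

/-- The two finite cyclic subgroups of `PSL₂(ℤ)`. -/
def genP : Bool → PSL2Z := fun i => if i then rP else sP

/-- The free product `C₂ * C₃`. -/
abbrev FP : Type := Monoid.CoprodI (fun i : Bool => ↥(Subgroup.zpowers (genP i)))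

/-- The natural map `C₂ * C₃ → PSL₂(ℤ)`. -/
def jFP : FP →* PSL2Z :=
  Monoid.CoprodI.lift (fun i => (Subgroup.zpowers (genP i)).subtype)

/-- The ping-pong sets. -/
def XPP : Bool → Set PlaneQuot := fun i =>
  if i then {p | ∃ v, p = ⟦v⟧ ∧ 0 < v.1 * v.2} else {p | ∃ v, p = ⟦v⟧ ∧ v.1 * v.2 < 0}

lemma XPP_nonempty : ∀ i, (XPP i).Nonempty := by
  intro i
  rcases i with _ | _
  · exact ⟨⟦((1:ℝ), (-1:ℝ))⟧, ⟨(1, -1), rfl, by norm_num⟩⟩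
  · exact ⟨⟦((1:ℝ), (1:ℝ))⟧, ⟨(1, 1), rfl, by norm_num⟩⟩

lemma XPP_disjoint : Pairwise (Function.onFun Disjoint XPP) := by
  have key : ∀ p : PlaneQuot, p ∈ XPP false → p ∈ XPP true → False := by
    rintro p ⟨v, rfl, hv⟩ ⟨w, hw, hw2⟩
    have hr := Quotient.exact hw
    rcases hr with rfl | rfl
    · linarith
    · have : w.1 * w.2 = (-w).1 * (-w).2 := by simp
      rw [this] at hw2
      linarith
  intro i j hij
  rcases i with _ | _ <;> rcases j with _ | _
  · exact absurd rfl hij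
  · exact Set.disjoint_left.2 fun p hp hp2 => key p hp hp2
  · exact Set.disjoint_left.2 fun p hp hp2 => key p hp2 hp
  · exact absurd rfl hij

lemma XPP_pp : Pairwise fun i j => ∀ h : ↥(Subgroup.zpowers (genP i)), h ≠ 1 →
    (Subgroup.zpowers (genP i)).subtype h • XPP j ⊆ XPP i := by
  intro i j hij
  intro h hne
  have hval : (h : PSL2Z) ≠ 1 := fun hh => hne (Subtype.ext hh)
  rcases i with _ | _ <;> rcases j with _ | _
  · exact absurd rfl hij
  · -- i = false (C₂, sP), j = true : sP • Xpos ⊆ Xneg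
    have hvs : (h : PSL2Z) = sP := by
      rcases zpowers_order_two sP_sq h.2 with h1 | h1
      · exact absurd h1 hval
      · exact h1
    intro x hx
    rw [Set.mem_smul_set] at hx
    obtain ⟨p, hp, rfl⟩ := hx
    obtain ⟨v, rfl, hv⟩ := hp
    show Subgroup.subtype _ h • (⟦v⟧ : PlaneQuot) ∈ XPP false
    rw [Subgroup.coe_subtype, hvs, sP, psl_smul]
    refine ⟨mact Smat v, rfl, ?_⟩
    have h00 : ((Smat : Matrix (Fin 2) (Fin 2) ℤ) 0 0 : ℝ) = 0 := by norm_num [Smat]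
    have h01 : ((Smat : Matrix (Fin 2) (Fin 2) ℤ) 0 1 : ℝ) = -1 := by norm_num [Smat]
    have h10 : ((Smat : Matrix (Fin 2) (Fin 2) ℤ) 1 0 : ℝ) = 1 := by norm_num [Smat]
    have h11 : ((Smat : Matrix (Fin 2) (Fin 2) ℤ) 1 1 : ℝ) = 0 := by norm_num [Smat]
    simp only [mact, h00, h01, h10, h11]
    nlinarith
  · -- i = true (C₃, rP), j = false : rP^k • Xneg ⊆ Xpos
    have hvr : (h : PSL2Z) = rP ∨ (h : PSL2Z) = rP * rP := by
      rcases zpowers_order_three rP_cube h.2 with h1 | h1 | h1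
      · exact absurd h1 hval
      · exact Or.inl h1
      · exact Or.inr h1
    intro x hx
    rw [Set.mem_smul_set] at hx
    obtain ⟨p, hp, rfl⟩ := hx
    obtain ⟨v, rfl, hv⟩ := hp
    show Subgroup.subtype _ h • (⟦v⟧ : PlaneQuot) ∈ XPP true
    rcases hvr with hvr | hvr
    · rw [Subgroup.coe_subtype, hvr, rP, psl_smul]
      refine ⟨mact Rmat v, rfl, ?_⟩
      have h00 : ((Rmat : Matrix (Fin 2) (Fin 2) ℤ) 0 0 : ℝ) = 0 := by norm_num [Rmat]
      have h01 : ((Rmat : Matrix (Fin 2) (Fin 2) ℤ) 0 1 : ℝ) = 1 := by norm_num [Rmat]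
      have h10 : ((Rmat : Matrix (Fin 2) (Fin 2) ℤ) 1 0 : ℝ) = -1 := by norm_num [Rmat]
      have h11 : ((Rmat : Matrix (Fin 2) (Fin 2) ℤ) 1 1 : ℝ) = 1 := by norm_num [Rmat]
      simp only [mact, h00, h01, h10, h11]
      nlinarith [sq_nonneg v.2]
    · rw [Subgroup.coe_subtype, hvr, rP, ← _root_.map_mul, psl_smul]
      refine ⟨mact (Rmat * Rmat) v, rfl, ?_⟩
      have hRR : Rmat * Rmat = ⟨!![-1,1;-1,0], by norm_num [Matrix.det_fin_two_of]⟩ :=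
        Rmat_sq
      rw [hRR]
      have h00 : (((⟨!![-1,1;-1,0], by norm_num [Matrix.det_fin_two_of]⟩ : SL(2,ℤ)) :
          Matrix (Fin 2) (Fin 2) ℤ) 0 0 : ℝ) = -1 := by norm_num
      have h01 : (((⟨!![-1,1;-1,0], by norm_num [Matrix.det_fin_two_of]⟩ : SL(2,ℤ)) :
          Matrix (Fin 2) (Fin 2) ℤ) 0 1 : ℝ) = 1 := by norm_num
      have h10 : (((⟨!![-1,1;-1,0], by norm_num [Matrix.det_fin_two_of]⟩ : SL(2,ℤ)) :
          Matrix (Fin 2) (Fin 2) ℤ) 1 0 : ℝ) = -1 := by norm_num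
      have h11 : (((⟨!![-1,1;-1,0], by norm_num [Matrix.det_fin_two_of]⟩ : SL(2,ℤ)) :
          Matrix (Fin 2) (Fin 2) ℤ) 1 1 : ℝ) = 0 := by norm_num
      simp only [mact, h00, h01, h10, h11]
      nlinarith [sq_nonneg v.1]
  · exact absurd rfl hij

/-- Three distinct elements of the cyclic group generated by `rP`. -/
def fTriple : Fin 3 → ↥(Subgroup.zpowers (genP true)) :=
  ![⟨1, Subgroup.one_mem _⟩, ⟨rP, Subgroup.mem_zpowers _⟩,
    ⟨rP * rP, mul_mem (Subgroup.mem_zpowers _) (Subgroup.mem_zpowers _)⟩]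

lemma FP_card : (3 : Cardinal) ≤ Cardinal.mk Bool ∨
    ∃ i, (3 : Cardinal) ≤ Cardinal.mk ↥(Subgroup.zpowers (genP i)) := by
  right
  refine ⟨true, ?_⟩
  have h1 : genP true = rP := rfl
  have hne1 : rP ≠ 1 := rP_ne_one
  have hne2 : rP * rP ≠ 1 := rP_sq_ne_one
  have hne3 : rP ≠ rP * rP := by
    intro h
    have h2 : rP * 1 = rP * rP := by rw [mul_one]; exact h
    exact rP_ne_one (mul_left_cancel h2).symm
  have hf : Function.Injective fTriple := by
    intro x y hxy
    have hval := congrArg Subtype.val hxy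
    fin_cases x <;> fin_cases y <;>
      simp only [fTriple, Matrix.cons_val_zero, Matrix.cons_val_one, Matrix.head_cons,
        Matrix.cons_val_two, Matrix.tail_cons] at hval ⊢ <;>
      first
        | rfl
        | exact absurd hval.symm hne1
        | exact absurd hval hne1
        | exact absurd hval.symm hne2
        | exact absurd hval hne2
        | exact absurd hval.symm hne3
        | exact absurd hval hne3
  calc (3 : Cardinal) = Cardinal.mk (Fin 3) := by simp
  _ ≤ _ := Cardinal.mk_le_of_injective hf

/-- Ping-pong: `jFP` is injective. -/
lemma jFP_injective : Function.Injective jFP :=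
  Monoid.CoprodI.lift_injective_of_ping_pong _ FP_card XPP XPP_nonempty XPP_disjoint XPP_pp

end B3Center
namespace B3Center
open Monoid Multiplicative Subgroup Matrix MatrixGroups

/-! ### The homomorphism `K → C₂ * C₃ → PSL₂(ℤ)` and its kernel -/

/-- Generator maps `ℤ → C₂`, `ℤ → C₃`. -/
def qf : ∀ i : Bool, Multiplicative ℤ →* ↥(Subgroup.zpowers (genP i)) :=
  fun i => zpowersHom _ ⟨genP i, Subgroup.mem_zpowers _⟩

lemma qf_coe (i : Bool) (g : Multiplicative ℤ) :
    ((qf i g : ↥(Subgroup.zpowers (genP i))) : PSL2Z) = genP i ^ (toAdd g) := by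
  rw [qf, zpowersHom_apply, SubgroupClass.coe_zpow]

lemma genP_false_sq : genP false * genP false = 1 := sP_sq
lemma genP_true_cube : genP true * genP true * genP true = 1 := rP_cube

lemma qf_comp_φK : ∀ i, ((Monoid.CoprodI.of (M := fun i : Bool =>
    ↥(Subgroup.zpowers (genP i)))).comp (qf i)).comp (φK i) = 1 := by
  intro i
  apply MonoidHom.ext_mint
  have h1 : φK i (ofAdd 1) = ofAdd (if i then (3:ℤ) else 2) := by
    simp [φK]
  rw [MonoidHom.comp_apply, MonoidHom.comp_apply, h1]
  rcases i with _ | _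
  · show Monoid.CoprodI.of (M := fun i : Bool => ↥(Subgroup.zpowers (genP i))) (qf false (ofAdd 2)) = 1
    have h2 : qf false (ofAdd 2) = 1 := by
      apply Subtype.ext
      rw [qf_coe]
      show genP false ^ ((2:ℤ)) = _
      rw [zpow_two, genP_false_sq, OneMemClass.coe_one]
    rw [h2, _root_.map_one]
  · show Monoid.CoprodI.of (M := fun i : Bool => ↥(Subgroup.zpowers (genP i))) (qf true (ofAdd 3)) = 1
    have h2 : qf true (ofAdd 3) = 1 := by
      apply Subtype.ext
      rw [qf_coe]
      show genP true ^ ((3:ℤ)) = _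
      have h3 : ((3:ℤ)) = ((3:ℕ) : ℤ) := rfl
      rw [h3, zpow_natCast, pow_succ, pow_two, genP_true_cube, OneMemClass.coe_one]
    rw [h2, _root_.map_one]

/-- The quotient map `K → C₂ * C₃` (killing the center). -/
def qhom : KG →* FP :=
  Monoid.PushoutI.lift
    (fun i => (Monoid.CoprodI.of (M := fun i : Bool =>
      ↥(Subgroup.zpowers (genP i)))).comp (qf i)) 1 qf_comp_φK

/-- The composite `K → PSL₂(ℤ)`. -/
def ρK : KG →* PSL2Z := jFP.comp qhom

lemma ρK_base (h : Multiplicative ℤ) : ρK (Monoid.PushoutI.base φK h) = 1 := by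
  rw [ρK, MonoidHom.comp_apply, qhom, Monoid.PushoutI.lift_base, MonoidHom.one_apply,
    _root_.map_one]

lemma ρK_of (i : Bool) (g : Multiplicative ℤ) :
    ρK (Monoid.PushoutI.of (φ := φK) i g) = genP i ^ (toAdd g) := by
  rw [ρK, MonoidHom.comp_apply, qhom, Monoid.PushoutI.lift_of]
  show jFP (Monoid.CoprodI.of (qf i g)) = _
  rw [jFP, Monoid.CoprodI.lift_of]
  exact qf_coe i g

lemma ρK_ka : ρK ka = sP := by
  rw [ka, ρK_of]
  show genP false ^ ((1:ℤ)) = sP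
  rw [zpow_one]; rfl

lemma ρK_kb : ρK kb = rP := by
  rw [kb, ρK_of]
  show genP true ^ ((1:ℤ)) = rP
  rw [zpow_one]; rfl

lemma zpow_emod {G : Type*} [Group G] {g : G} {c : ℤ} (hg : g ^ c = 1) (m : ℤ) :
    g ^ m = g ^ (m % c) := by
  conv_lhs => rw [← Int.mul_ediv_add_emod m c]
  rw [_root_.zpow_add, _root_.zpow_mul, hg, _root_.one_zpow, one_mul]

lemma mem_range_φK (i : Bool) (g : Multiplicative ℤ) :
    g ∈ MonoidHom.range (φK i) ↔ (if i then (3:ℤ) else 2) ∣ toAdd g := by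
  constructor
  · rintro ⟨x, rfl⟩
    refine ⟨toAdd x, ?_⟩
    simp [φK, toAdd_zpow, mul_comm]
  · rintro ⟨t, ht⟩
    refine ⟨ofAdd t, ?_⟩
    apply toAdd.injective
    simp [φK, toAdd_zpow, ht, mul_comm]

/-- The key kernel computation: `ker ρK = ⟨kz⟩`. -/
lemma ker_ρK {y : KG} (hy : ρK y = 1) : ∃ n : ℤ, y = kz ^ n := by
  classical
  obtain ⟨n, w, hred, rfl⟩ := exists_decomp y
  refine ⟨n, ?_⟩
  have hz : kz ^ n = Monoid.PushoutI.base φK (ofAdd n) := by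
    rw [kz, ← map_zpow]
    congr 1
    apply toAdd.injective
    simp [toAdd_zpow]
  -- the image word in the free product
  have hne_one : ∀ l ∈ (w.toList.map (fun l : (Σ _ : Bool, Multiplicative ℤ) =>
      (⟨l.1, qf l.1 l.2⟩ : Σ i : Bool, ↥(Subgroup.zpowers (genP i))))), l.2 ≠ 1 := by
    rintro l hl
    rw [List.mem_map] at hl
    obtain ⟨l', hl', rfl⟩ := hl
    have hnr : l'.2 ∉ MonoidHom.range (φK l'.1) := hred l' hl'
    rw [mem_range_φK] at hnr
    intro hone
    obtain ⟨i, m⟩ := l'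
    have hcoe : genP i ^ (toAdd m) = 1 := by
      have h5 := congrArg Subtype.val hone
      rwa [qf_coe, OneMemClass.coe_one] at h5
    rcases i with _ | _
    · norm_num at hnr
      have hm : toAdd m % 2 = 1 := by omega
      rw [zpow_emod (by rw [zpow_two, genP_false_sq]) (toAdd m), hm, zpow_one] at hcoe
      exact sP_ne_one hcoe
    · norm_num at hnr
      have hm : toAdd m % 3 = 1 ∨ toAdd m % 3 = 2 := by omega
      have h3 : genP true ^ (3:ℤ) = 1 := by
        have : ((3:ℤ)) = ((3:ℕ) : ℤ) := rfl
        rw [this, zpow_natCast, pow_succ, pow_two, genP_true_cube]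
      rw [zpow_emod h3 (toAdd m)] at hcoe
      rcases hm with hm | hm
      · rw [hm, zpow_one] at hcoe
        exact rP_ne_one hcoe
      · rw [hm, zpow_two] at hcoe
        exact rP_sq_ne_one hcoe
  have hchain : (w.toList.map (fun l : (Σ _ : Bool, Multiplicative ℤ) =>
      (⟨l.1, qf l.1 l.2⟩ : Σ i : Bool, ↥(Subgroup.zpowers (genP i))))).Chain'
        (fun l l' => l.1 ≠ l'.1) := by
    rw [List.Chain', List.isChain_map]
    exact w.chain_ne
  set w' : Monoid.CoprodI.Word (fun i : Bool => ↥(Subgroup.zpowers (genP i))) :=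
    ⟨w.toList.map (fun l : (Σ _ : Bool, Multiplicative ℤ) =>
      (⟨l.1, qf l.1 l.2⟩ : Σ i : Bool, ↥(Subgroup.zpowers (genP i)))), hne_one, hchain⟩
    with hw'
  have hprod : ρK (Monoid.PushoutI.ofCoprodI w.prod) = jFP w'.prod := by
    rw [Monoid.CoprodI.Word.prod, Monoid.CoprodI.Word.prod, ← MonoidHom.comp_apply,
      map_list_prod, map_list_prod]
    congr 1
    simp only [hw', List.map_map]
    apply List.map_congr_left
    intro l _
    show ρK (Monoid.PushoutI.ofCoprodI (Monoid.CoprodI.of l.2)) = jFP (Monoid.CoprodI.of _)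
    rw [Monoid.PushoutI.ofCoprodI_of, ρK_of, jFP, Monoid.CoprodI.lift_of]
    exact (qf_coe l.1 l.2).symm
  have hy2 : jFP w'.prod = 1 := by
    rw [← hprod]
    have := hy
    rw [_root_.map_mul, ρK_base, one_mul] at this
    exact this
  have hw'1 : w'.prod = 1 := jFP_injective (by rw [hy2, _root_.map_one])
  have hw'empty : w' = Monoid.CoprodI.Word.empty := by
    apply (Monoid.CoprodI.Word.equiv (M := fun i : Bool =>
      ↥(Subgroup.zpowers (genP i)))).symm.injective
    show w'.prod = Monoid.CoprodI.Word.prod _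
    rw [hw'1, Monoid.CoprodI.Word.prod_empty]
  have hnil : w.toList = [] := by
    have := congrArg Monoid.CoprodI.Word.toList hw'empty
    rw [hw'] at this
    simpa using this
  have hwempty : w = Monoid.CoprodI.Word.empty := by
    apply Monoid.CoprodI.Word.ext
    simpa using hnil
  rw [hwempty, Monoid.CoprodI.Word.prod_empty, _root_.map_one, mul_one, hz]

end B3Center
namespace B3Center
open Monoid Multiplicative Subgroup Matrix MatrixGroups

/-! ### Centralizer computation in `PSL₂(ℤ)` -/

lemma sl_cent (g : SL(2,ℤ))
    (h1 : T2mat * g = g * T2mat ∨ T2mat * g = -(g * T2mat))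
    (h2 : L2mat * g = g * L2mat ∨ L2mat * g = -(g * L2mat)) :
    g = 1 ∨ g = -1 := by
  have hdet : (g : Matrix (Fin 2) (Fin 2) ℤ) 0 0 * (g : Matrix (Fin 2) (Fin 2) ℤ) 1 1
      - (g : Matrix (Fin 2) (Fin 2) ℤ) 0 1 * (g : Matrix (Fin 2) (Fin 2) ℤ) 1 0 = 1 := by
    have hd := g.2
    rwa [Matrix.det_fin_two] at hd
  -- entries from the T² condition
  have hT : (g : Matrix (Fin 2) (Fin 2) ℤ) 1 0 = 0 ∧
      (g : Matrix (Fin 2) (Fin 2) ℤ) 1 1 = (g : Matrix (Fin 2) (Fin 2) ℤ) 0 0 := by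
    rcases h1 with h1 | h1
    · have hm := congrArg (fun t : SL(2,ℤ) => (t : Matrix (Fin 2) (Fin 2) ℤ)) h1
      simp only [Matrix.SpecialLinearGroup.coe_mul] at hm
      rw [← Matrix.ext_iff] at hm
      have e00 := hm 0 0
      have e01 := hm 0 1
      simp [T2mat, Matrix.mul_apply, Fin.sum_univ_two] at e00 e01
      constructor <;> omega
    · have hm := congrArg (fun t : SL(2,ℤ) => (t : Matrix (Fin 2) (Fin 2) ℤ)) h1
      simp only [Matrix.SpecialLinearGroup.coe_mul, Matrix.SpecialLinearGroup.coe_neg] at hm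
      rw [← Matrix.ext_iff] at hm
      have e00 := hm 0 0
      have e10 := hm 1 0
      have e11 := hm 1 1
      simp [T2mat, Matrix.mul_apply, Fin.sum_univ_two, Matrix.neg_apply] at e00 e10 e11
      exfalso
      have hc : (g : Matrix (Fin 2) (Fin 2) ℤ) 1 0 = 0 := by omega
      have ha : (g : Matrix (Fin 2) (Fin 2) ℤ) 0 0 = 0 := by omega
      have hd' : (g : Matrix (Fin 2) (Fin 2) ℤ) 1 1 = 0 := by omega
      rw [hc, ha, hd'] at hdet
      simp at hdet
  have hL : (g : Matrix (Fin 2) (Fin 2) ℤ) 0 1 = 0 := by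
    rcases h2 with h2 | h2
    · have hm := congrArg (fun t : SL(2,ℤ) => (t : Matrix (Fin 2) (Fin 2) ℤ)) h2
      simp only [Matrix.SpecialLinearGroup.coe_mul] at hm
      rw [← Matrix.ext_iff] at hm
      have e00 := hm 0 0
      simp [L2mat, Matrix.mul_apply, Fin.sum_univ_two] at e00
      omega
    · have hm := congrArg (fun t : SL(2,ℤ) => (t : Matrix (Fin 2) (Fin 2) ℤ)) h2
      simp only [Matrix.SpecialLinearGroup.coe_mul, Matrix.SpecialLinearGroup.coe_neg] at hm
      rw [← Matrix.ext_iff] at hm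
      have e00 := hm 0 0
      have e01 := hm 0 1
      simp [L2mat, Matrix.mul_apply, Fin.sum_univ_two, Matrix.neg_apply] at e00 e01
      exfalso
      have hb : (g : Matrix (Fin 2) (Fin 2) ℤ) 0 1 = 0 := by omega
      have ha : (g : Matrix (Fin 2) (Fin 2) ℤ) 0 0 = 0 := by omega
      have hd2 : (g : Matrix (Fin 2) (Fin 2) ℤ) 1 1 = (g : Matrix (Fin 2) (Fin 2) ℤ) 0 0 := hT.2
      rw [hb, ha, hT.1, hd2, ha] at hdet
      simp at hdet
  have hasq : (g : Matrix (Fin 2) (Fin 2) ℤ) 0 0 * (g : Matrix (Fin 2) (Fin 2) ℤ) 0 0 = 1 := by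
    have := hdet
    rw [hT.1, hT.2, hL] at this
    simpa using this
  rcases mul_self_eq_one_iff.1 hasq with ha | ha
  · left
    ext i j
    fin_cases i <;> fin_cases j <;>
      simp [ha, hT.1, hT.2, hL, Matrix.SpecialLinearGroup.coe_one, Matrix.one_apply]
  · right
    ext i j
    fin_cases i <;> fin_cases j <;>
      simp [ha, hT.1, hT.2, hL, Matrix.SpecialLinearGroup.coe_neg, Matrix.neg_apply,
        Matrix.SpecialLinearGroup.coe_one, Matrix.one_apply]

lemma psl_cent {x : PSL2Z} (h1 : x * mkP T2mat = mkP T2mat * x)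
    (h2 : x * mkP L2mat = mkP L2mat * x) : x = 1 := by
  obtain ⟨g, rfl⟩ := QuotientGroup.mk'_surjective pmOne x
  have key : ∀ u : SL(2,ℤ), QuotientGroup.mk' pmOne g * mkP u = mkP u * QuotientGroup.mk' pmOne g
      → u * g = g * u ∨ u * g = -(g * u) := by
    intro u hu
    have : mkP (g * u) = mkP (u * g) := by
      rw [_root_.map_mul, _root_.map_mul]
      exact hu
    rw [mkP, QuotientGroup.mk'_eq_mk'] at this
    obtain ⟨n, hn, hgn⟩ := this
    rcases mem_pmOne_iff.1 hn with rfl | rfl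
    · left
      rw [mul_one] at hgn
      exact hgn.symm
    · right
      rw [mul_neg, mul_one] at hgn
      rw [← hgn]
  have hT := key T2mat h1
  have hL := key L2mat h2
  rcases sl_cent g hT hL with rfl | rfl
  · rfl
  · show mkP (-1) = 1
    rw [mkP_eq_one_iff]
    right; rfl

/-! ### Main theorem ingredients -/

lemma fB_injective : Function.Injective fB := by
  intro p q hpq
  have h1 : gK (fB p) = p := by
    rw [← MonoidHom.comp_apply, gK_comp_fB]; rfl
  have h2 : gK (fB q) = q := by
    rw [← MonoidHom.comp_apply, gK_comp_fB]; rfl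
  rw [← h1, ← h2, hpq]

lemma ρK_fB_s0sq : ρK (fB ((σ 0) ^ 2)) = mkP T2mat := by
  rw [map_pow, fB_s0]
  have h1 : ρK (kb⁻¹ * ka) = mkP Tmat := by
    rw [_root_.map_mul, map_inv, ρK_ka, ρK_kb]
    have hrinv : rP⁻¹ = rP * rP := by
      apply inv_eq_of_mul_eq_one_right
      have h3 := rP_cube
      rwa [mul_assoc] at h3
    rw [hrinv, sP, rP, ← _root_.map_mul, ← _root_.map_mul, RRS_eq_T]
  rw [_root_.map_pow, h1, pow_two, ← _root_.map_mul, Tmat_sq]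

lemma ρK_fB_s1sq : ρK (fB ((σ 1) ^ 2)) = mkP L2mat := by
  rw [map_pow, fB_s1]
  have h1 : ρK (ka⁻¹ * (kb * kb)) = mkP Lmat := by
    rw [_root_.map_mul, map_inv, _root_.map_mul, ρK_ka, ρK_kb]
    have hsinv : sP⁻¹ = sP := by
      apply inv_eq_of_mul_eq_one_right
      exact sP_sq
    rw [hsinv, sP, rP, ← _root_.map_mul, ← _root_.map_mul, SRR_eq_L]
  rw [_root_.map_pow, h1, pow_two, ← _root_.map_mul, Lmat_sq]

lemma s0sq_mem_ker : (σ 0) ^ 2 ∈ πB3.ker := by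
  rw [MonoidHom.mem_ker, map_pow]
  have : πB3 (σ 0) = permGen 0 := by
    rw [σ, πB3, PresentedGroup.toGroup.of]
  rw [this]
  decide

lemma s1sq_mem_ker : (σ 1) ^ 2 ∈ πB3.ker := by
  rw [MonoidHom.mem_ker, map_pow]
  have : πB3 (σ 1) = permGen 1 := by
    rw [σ, πB3, PresentedGroup.toGroup.of]
  rw [this]
  decide

lemma central_eq_zpow {x : BraidGroup3}
    (h0 : x * (σ 0) ^ 2 = (σ 0) ^ 2 * x)
    (h1 : x * (σ 1) ^ 2 = (σ 1) ^ 2 * x) :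
    ∃ n : ℤ, x = Δsq ^ n := by
  have hc0 : ρK (fB x) * mkP T2mat = mkP T2mat * ρK (fB x) := by
    rw [← ρK_fB_s0sq, ← _root_.map_mul, ← _root_.map_mul, ← _root_.map_mul, ← _root_.map_mul, h0]
  have hc1 : ρK (fB x) * mkP L2mat = mkP L2mat * ρK (fB x) := by
    rw [← ρK_fB_s1sq, ← _root_.map_mul, ← _root_.map_mul, ← _root_.map_mul, ← _root_.map_mul, h1]
  have hone : ρK (fB x) = 1 := psl_cent hc0 hc1
  obtain ⟨n, hn⟩ := ker_ρK hone
  refine ⟨n, fB_injective ?_⟩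
  rw [hn, map_zpow, fB_Δsq]

end B3Center

/-- The center of the pure braid group `P₃ = ker π` is the cyclic subgroup
generated by the full twist `Δ² = (σ₁σ₂)³`. -/
theorem center_pureBraidGroup3 :
    Subgroup.center πB3.ker = Subgroup.zpowers (⟨Δsq, Δsq_mem_ker⟩ : πB3.ker) := by
  apply le_antisymm
  · intro x hx
    rw [Subgroup.mem_center_iff] at hx
    have h0 : (x : BraidGroup3) * (σ 0) ^ 2 = (σ 0) ^ 2 * (x : BraidGroup3) := by
      have h := congrArg Subtype.val (hx ⟨(σ 0) ^ 2, B3Center.s0sq_mem_ker⟩)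
      exact h.symm
    have h1 : (x : BraidGroup3) * (σ 1) ^ 2 = (σ 1) ^ 2 * (x : BraidGroup3) := by
      have h := congrArg Subtype.val (hx ⟨(σ 1) ^ 2, B3Center.s1sq_mem_ker⟩)
      exact h.symm
    obtain ⟨n, hn⟩ := B3Center.central_eq_zpow h0 h1
    refine Subgroup.mem_zpowers_iff.2 ⟨n, ?_⟩
    apply Subtype.ext
    rw [SubgroupClass.coe_zpow]
    exact hn.symm
  · rw [Subgroup.zpowers_le, Subgroup.mem_center_iff]
    intro g
    apply Subtype.ext
    exact (B3Center.Δsq_comm (g : BraidGroup3)).symm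
end

section
/- The quotient of B₃ by its center is isomorphic to PSL(2,ℤ): there is a group isomorphism between B₃ ⧸ Subgroup.center B₃ and Matrix.SpecialLinearGroup (Fin 2) ℤ ⧸ Subgroup.center (Matrix.SpecialLinearGroup (Fin 2) ℤ). -/
open Matrix MatrixGroups

abbrev SL2Z := Matrix.SpecialLinearGroup (Fin 2) ℤ

namespace B3PSL
open ModularGroup

def Bm : SL2Z := ⟨!![1,0;-1,1], by norm_num [Matrix.det_fin_two_of]⟩
def negOne : SL2Z := ⟨!![-1,0;0,-1], by norm_num [Matrix.det_fin_two_of]⟩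

lemma S_mem : S ∈ Subgroup.closure ({T, Bm} : Set SL2Z) := by
  have h : S = (T * Bm * T)⁻¹ := by apply Subtype.ext; decide
  rw [h]
  exact Subgroup.inv_mem _ (Subgroup.mul_mem _ (Subgroup.mul_mem _
    (Subgroup.subset_closure (by simp)) (Subgroup.subset_closure (by simp)))
    (Subgroup.subset_closure (by simp)))

lemma negOne_eq : negOne = S * S := Subtype.ext (by decide)

lemma negOne_mem : negOne ∈ Subgroup.closure ({T, Bm} : Set SL2Z) := by
  rw [negOne_eq]; exact Subgroup.mul_mem _ S_mem S_mem

lemma val_mul' (A B : SL2Z) : (A * B).val = A.val * B.val := rfl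

lemma val_one' : (1 : SL2Z).val = 1 := rfl

lemma T_zpow_mul_coe (n : ℤ) (g : SL2Z) :
    (T ^ n * g).val = !![g.val 0 0 + n * g.val 1 0, g.val 0 1 + n * g.val 1 1;
      g.val 1 0, g.val 1 1] := by
  have : g.val = !![g.val 0 0, g.val 0 1; g.val 1 0, g.val 1 1] := Matrix.eta_fin_two _
  rw [val_mul', coe_T_zpow]
  conv_lhs => rw [this]
  rw [Matrix.mul_fin_two]; norm_num

lemma S_mul_coe (g : SL2Z) :
    (S * g).val = !![-(g.val 1 0), -(g.val 1 1); g.val 0 0, g.val 0 1] := by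
  have : g.val = !![g.val 0 0, g.val 0 1; g.val 1 0, g.val 1 1] := Matrix.eta_fin_two _
  rw [val_mul', coe_S]
  conv_lhs => rw [this]
  rw [Matrix.mul_fin_two]; norm_num

lemma closure_TBm : Subgroup.closure ({T, Bm} : Set SL2Z) = ⊤ := by
  rw [eq_top_iff]
  intro g _
  have main : ∀ n : ℕ, ∀ g : SL2Z, (g.val 1 0).natAbs = n →
      g ∈ Subgroup.closure ({T, Bm} : Set SL2Z) := by
    intro n
    induction n using Nat.strong_induction_on with
    | _ n ih =>
      intro g hg
      by_cases hc : g.val 1 0 = 0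
      · have hdet := g.2
        rw [Matrix.det_fin_two, hc] at hdet
        simp at hdet
        rcases Int.eq_one_or_neg_one_of_mul_eq_one' hdet with ⟨ha, hd⟩ | ⟨ha, hd⟩
        · have hgT : g = T ^ (g.val 0 1) := by
            apply Subtype.ext
            rw [coe_T_zpow]
            have := Matrix.eta_fin_two g.val
            rw [ha, hd, hc] at this
            exact this
          rw [hgT]; exact Subgroup.zpow_mem _ (Subgroup.subset_closure (by simp)) _
        · have hgT : g = negOne * T ^ (-(g.val 0 1)) := by
            apply Subtype.ext
            rw [val_mul', coe_T_zpow]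
            have := Matrix.eta_fin_two g.val
            rw [ha, hd, hc] at this
            rw [this]
            show _ = negOne.val * _
            rw [negOne, Matrix.mul_fin_two]
            norm_num
          rw [hgT]
          exact Subgroup.mul_mem _ negOne_mem
            (Subgroup.zpow_mem _ (Subgroup.subset_closure (by simp)) _)
      · set a := g.val 0 0 with ha
        set c := g.val 1 0 with hc0
        set q := a / c with hq
        set g' := S * (T ^ (-q) * g) with hg'
        have e1 : (T ^ (-q) * g).val 0 0 = a % c := by
          rw [T_zpow_mul_coe]
          show a + -q * c = a % c
          rw [Int.emod_def, hq]; ring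
        have e2 : g'.val 1 0 = a % c := by
          rw [hg', S_mul_coe]
          show (T ^ (-q) * g).val 0 0 = a % c
          exact e1
        have hlt : (g'.val 1 0).natAbs < n := by
          rw [e2]
          have h1 := Int.emod_nonneg a hc
          have h2 := Int.emod_lt a (b := c) hc
          omega
        have hmem := ih _ hlt g' rfl
        have : g = T ^ q * (S⁻¹ * g') := by rw [hg']; group
        rw [this]
        exact Subgroup.mul_mem _
          (Subgroup.zpow_mem _ (Subgroup.subset_closure (by simp)) _)
          (Subgroup.mul_mem _ (Subgroup.inv_mem _ S_mem) hmem)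
  exact main _ g rfl


lemma negOne_mat : (-1 : Matrix (Fin 2) (Fin 2) ℤ) = !![-1,0;0,-1] := by
  ext i j; fin_cases i <;> fin_cases j <;> simp

lemma negOne_coe : negOne.val = (-1 : Matrix (Fin 2) (Fin 2) ℤ) := by
  rw [negOne_mat]; rfl

lemma scalar_fin_two (r : ℤ) : (Matrix.scalar (Fin 2)) r = !![r,0;0,r] := by
  rw [Matrix.scalar_apply]
  ext i j; fin_cases i <;> fin_cases j <;> simp [Matrix.diagonal]

lemma mem_center_iff' (u : SL2Z) :
    u ∈ Subgroup.center SL2Z ↔ u = 1 ∨ u = negOne := by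
  rw [Matrix.SpecialLinearGroup.mem_center_iff]
  constructor
  · rintro ⟨r, hr, hscal⟩
    have hr2 : r = 1 ∨ r = -1 := by
      have h2 : r ^ 2 = 1 := by simpa using hr
      have := Int.isUnit_iff.mp (IsUnit.of_mul_eq_one_right r (by nlinarith))
      tauto
    rw [scalar_fin_two] at hscal
    rcases hr2 with rfl | rfl
    · left; apply Subtype.ext
      rw [← hscal]; rw [val_one', ← Matrix.one_fin_two]
    · right; apply Subtype.ext; rw [← hscal, negOne_coe]
      rw [negOne_mat]
  · rintro (rfl | rfl)
    · exact ⟨1, by norm_num, by rw [scalar_fin_two, val_one',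
        ← Matrix.one_fin_two]⟩
    · exact ⟨-1, by norm_num, by rw [scalar_fin_two, negOne_coe,
        negOne_mat]⟩

lemma center_psl_eq_bot :
    Subgroup.center (SL2Z ⧸ Subgroup.center SL2Z) = ⊥ := by
  rw [eq_bot_iff]
  intro u hu
  obtain ⟨h, rfl⟩ := QuotientGroup.mk_surjective u
  have key : ∀ g : SL2Z, h * g = g * h ∨ h * g = g * h * negOne := by
    intro g
    have hcomm := (Subgroup.mem_center_iff.mp hu) (QuotientGroup.mk g)
    rw [← QuotientGroup.mk_mul, ← QuotientGroup.mk_mul, QuotientGroup.eq] at hcomm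
    have hz := (mem_center_iff' _).mp hcomm
    rcases hz with hz | hz
    · left
      have : h * g = (g * h) * ((g * h)⁻¹ * (h * g)) := by group
      rw [this, hz, mul_one]
    · right
      have : h * g = (g * h) * ((g * h)⁻¹ * (h * g)) := by group
      rw [this, hz]
  -- entry analysis
  set a := h.val 0 0 with ha'
  set b := h.val 0 1 with hb'
  set c := h.val 1 0 with hc'
  set d := h.val 1 1 with hd'
  have heta : h.val = !![a, b; c, d] := Matrix.eta_fin_two _
  have hdet : a * d - b * c = 1 := by
    have := h.2
    rw [Matrix.det_fin_two] at this
    exact this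
  have hT := key T
  have hB := key Bm
  have hc0 : c = 0 ∧ a = d := by
    rcases hT with hT | hT
    · have hv := congr_arg Subtype.val hT
      rw [val_mul', val_mul', coe_T, heta,
        Matrix.mul_fin_two, Matrix.mul_fin_two] at hv
      have h00 := congr_fun (congr_fun hv 0) 0
      have h01 := congr_fun (congr_fun hv 0) 1
      simp at h00 h01
      constructor <;> omega
    · have hv := congr_arg Subtype.val hT
      rw [val_mul', val_mul',
        val_mul', negOne_coe, mul_neg_one, coe_T, heta,
        Matrix.mul_fin_two, Matrix.mul_fin_two] at hv
      have h10 := congr_fun (congr_fun hv 1) 0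
      have h11 := congr_fun (congr_fun hv 1) 1
      simp at h10 h11
      exfalso
      have hcc : c = 0 := by omega
      have hdd : d = 0 := by omega
      rw [hcc, hdd] at hdet; simp at hdet
  have hb0 : b = 0 := by
    rcases hB with hB | hB
    · have hv := congr_arg Subtype.val hB
      rw [val_mul', val_mul', heta,
        show Bm.val = !![1,0;-1,1] from rfl,
        Matrix.mul_fin_two, Matrix.mul_fin_two] at hv
      have h00 := congr_fun (congr_fun hv 0) 0
      simp at h00
      omega
    · have hv := congr_arg Subtype.val hB
      rw [val_mul', val_mul',
        val_mul', negOne_coe, mul_neg_one, heta,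
        show Bm.val = !![1,0;-1,1] from rfl,
        Matrix.mul_fin_two, Matrix.mul_fin_two] at hv
      have h00 := congr_fun (congr_fun hv 0) 0
      have h01 := congr_fun (congr_fun hv 0) 1
      simp at h00 h01
      exfalso
      have hbb : b = 0 := by omega
      have haa : a = 0 := by omega
      rw [hbb, haa] at hdet; simp at hdet
  obtain ⟨hc0, had⟩ := hc0
  have hmem : h ∈ Subgroup.center SL2Z := by
    rw [mem_center_iff']
    have ha1 : a = 1 ∨ a = -1 := by
      rw [hb0, hc0, ← had] at hdet
      have haa : a * a = 1 := by linarith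
      have := Int.isUnit_iff.mp (IsUnit.of_mul_eq_one_right a haa)
      tauto
    rcases ha1 with h1 | h1
    · left; apply Subtype.ext
      rw [heta, hb0, hc0, ← had, h1, val_one', ← Matrix.one_fin_two]
    · right; apply Subtype.ext
      rw [heta, hb0, hc0, ← had, h1, negOne_coe, negOne_mat]
  simp [QuotientGroup.eq_one_iff, hmem]


section words
variable {G H : Type*} [Group G] [Group H]

def blk (x y : G) : Bool → G
  | false => y * x
  | true => y * (y * x)

def wb (x y : G) (bs : List Bool) : G := (bs.map (blk x y)).prod

def wrd (x y : G) (e : Bool) (bs : List Bool) (f : Fin 3) : G :=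
  (if e then x else 1) * wb x y bs * y ^ (f : ℕ)

lemma map_blk (φ : G →* H) (x y : G) (b : Bool) : φ (blk x y b) = blk (φ x) (φ y) b := by
  cases b <;> simp [blk]

lemma map_wb (φ : G →* H) (x y : G) (bs : List Bool) :
    φ (wb x y bs) = wb (φ x) (φ y) bs := by
  induction bs with
  | nil => simp [wb]
  | cons b rest ih =>
    have h1 : wb x y (b :: rest) = blk x y b * wb x y rest := by unfold wb; simp
    have h2 : wb (φ x) (φ y) (b :: rest) = blk (φ x) (φ y) b * wb (φ x) (φ y) rest := by
      unfold wb; simp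
    rw [h1, h2, _root_.map_mul, map_blk, ih]

lemma map_wrd (φ : G →* H) (x y : G) (e : Bool) (bs : List Bool) (f : Fin 3) :
    φ (wrd x y e bs f) = wrd (φ x) (φ y) e bs f := by
  unfold wrd
  cases e <;> simp [map_wb]

end words

-- SL2Z instances of x and y
def XX : SL2Z := ⟨!![0,1;-1,0], by norm_num [Matrix.det_fin_two_of]⟩
def YY : SL2Z := ⟨!![0,1;-1,1], by norm_num [Matrix.det_fin_two_of]⟩

def Pos (m : Matrix (Fin 2) (Fin 2) ℤ) : Prop :=
  0 ≤ m 0 0 ∧ 0 ≤ m 0 1 ∧ 0 ≤ m 1 0 ∧ 0 ≤ m 1 1 ∧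
    3 ≤ m 0 0 + m 0 1 + m 1 0 + m 1 1

instance (m : Matrix (Fin 2) (Fin 2) ℤ) : Decidable (Pos m) := by
  unfold Pos; infer_instance

lemma pos_L_mul {p : Matrix (Fin 2) (Fin 2) ℤ} (hp : Pos p) :
    Pos (!![1,0;1,1] * p) := by
  obtain ⟨h1,h2,h3,h4,h5⟩ := hp
  have e : !![(1:ℤ),0;1,1] * p = !![p 0 0, p 0 1; p 0 0 + p 1 0, p 0 1 + p 1 1] := by
    conv_lhs => rw [Matrix.eta_fin_two p]
    rw [Matrix.mul_fin_two]
    norm_num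
  rw [e]
  refine ⟨by simpa, by simpa, ?_, ?_, ?_⟩ <;> simp <;> omega

lemma pos_R_mul {p : Matrix (Fin 2) (Fin 2) ℤ} (hp : Pos p) :
    Pos (!![1,1;0,1] * p) := by
  obtain ⟨h1,h2,h3,h4,h5⟩ := hp
  have e : !![(1:ℤ),1;0,1] * p = !![p 0 0 + p 1 0, p 0 1 + p 1 1; p 1 0, p 1 1] := by
    conv_lhs => rw [Matrix.eta_fin_two p]
    rw [Matrix.mul_fin_two]
    norm_num
  rw [e]
  refine ⟨?_, ?_, by simpa, by simpa, ?_⟩ <;> simp <;> omega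

lemma blk_false_coe : (blk XX YY false).val = -(!![1,0;1,1]) := by decide
lemma blk_true_coe : (blk XX YY true).val = -(!![1,1;0,1]) := by decide

lemma wb_sign : ∀ bs : List Bool, bs ≠ [] →
    ∃ P : Matrix (Fin 2) (Fin 2) ℤ, Pos P ∧
      ((wb XX YY bs).val = P ∨ (wb XX YY bs).val = -P) := by
  intro bs
  induction bs with
  | nil => intro h; exact absurd rfl h
  | cons b rest ih =>
    intro _
    by_cases hrest : rest = []
    · subst hrest
      cases b
      · exact ⟨!![1,0;1,1], by decide, Or.inr (by unfold wb; simp [blk_false_coe])⟩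
      · exact ⟨!![1,1;0,1], by decide, Or.inr (by unfold wb; simp [blk_true_coe])⟩
    · obtain ⟨P, hP, hpm⟩ := ih hrest
      have hsplit : (wb XX YY (b :: rest)).val = (blk XX YY b).val * (wb XX YY rest).val := by
        unfold wb
        simp
      cases b
      · refine ⟨!![1,0;1,1] * P, pos_L_mul hP, ?_⟩
        rw [hsplit, blk_false_coe]
        rcases hpm with h | h
        · right; rw [h]; exact neg_mul _ _
        · left; rw [h]; exact neg_mul_neg _ _
      · refine ⟨!![1,1;0,1] * P, pos_R_mul hP, ?_⟩
        rw [hsplit, blk_true_coe]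
        rcases hpm with h | h
        · right; rw [h]; exact neg_mul _ _
        · left; rw [h]; exact neg_mul_neg _ _


lemma wrd_pm_one {e : Bool} {bs : List Bool} {f : Fin 3}
    (h : wrd XX YY e bs f = 1 ∨ wrd XX YY e bs f = negOne) :
    e = false ∧ bs = [] ∧ f = 0 := by
  cases bs with
  | nil =>
    rcases h with h | h <;>
      have hv := congr_arg Subtype.val h <;>
      revert hv <;>
      cases e <;> fin_cases f <;> intro hv <;>
      first
        | exact ⟨rfl, rfl, rfl⟩
        | exact absurd hv (by decide)
  | cons b rest =>
    exfalso
    obtain ⟨P, hP, hpm⟩ := wb_sign (b :: rest) (by simp)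
    have hor : Pos ((wb XX YY (b :: rest)).val) ∨ Pos (-((wb XX YY (b :: rest)).val)) := by
      rcases hpm with h' | h'
      · left; rw [h']; exact hP
      · right; rw [h', neg_neg]; exact hP
    unfold wrd at h
    have hwb : wb XX YY (b :: rest) =
        (if e = true then XX else 1)⁻¹ *
          ((if e = true then XX else 1) * wb XX YY (b :: rest) * YY ^ ((f : ℕ))) *
          (YY ^ ((f : ℕ)))⁻¹ := by
      group
    rcases h with h | h
    · rw [h] at hwb
      rw [congr_arg Subtype.val hwb] at hor
      revert hor
      cases e <;> fin_cases f <;> decide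
    · rw [h] at hwb
      rw [congr_arg Subtype.val hwb] at hor
      revert hor
      cases e <;> fin_cases f <;> decide
def aa : BraidGroup3 := PresentedGroup.of 0
def bb : BraidGroup3 := PresentedGroup.of 1
def dd : BraidGroup3 := aa * bb * aa
def tt : BraidGroup3 := aa * bb
def zz : BraidGroup3 := dd * dd

lemma hbraid : aa * bb * aa = bb * aa * bb := by
  have h1 : (PresentedGroup.mk braidRel3) (FreeGroup.of 0 * FreeGroup.of 1 * FreeGroup.of 0 *
      (FreeGroup.of 1)⁻¹ * (FreeGroup.of 0)⁻¹ * (FreeGroup.of 1)⁻¹) = 1 := by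
    apply (QuotientGroup.eq_one_iff _).mpr
    exact Subgroup.subset_normalClosure rfl
  simp only [_root_.map_mul, map_inv] at h1
  have h2 : (aa * bb * aa) * (bb * aa * bb)⁻¹ = 1 := by
    calc (aa * bb * aa) * (bb * aa * bb)⁻¹
        = aa * bb * aa * bb⁻¹ * aa⁻¹ * bb⁻¹ := by group
      _ = 1 := h1
  exact mul_inv_eq_one.mp h2

lemma hda : dd * aa = bb * dd := by
  have : dd * aa = (bb * aa * bb) * aa := by rw [dd, hbraid]
  rw [this, dd]
  group

lemma hdb : dd * bb = aa * dd := by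
  have : dd * bb = aa * (bb * aa * bb) := by rw [dd]; group
  rw [this, ← hbraid, dd]

lemma hza : zz * aa = aa * zz := by
  calc zz * aa = dd * (dd * aa) := by rw [zz]; group
    _ = dd * (bb * dd) := by rw [hda]
    _ = (dd * bb) * dd := by group
    _ = aa * dd * dd := by rw [hdb]
    _ = aa * zz := by rw [zz]; group

lemma hzb : zz * bb = bb * zz := by
  calc zz * bb = dd * (dd * bb) := by rw [zz]; group
    _ = dd * (aa * dd) := by rw [hdb]
    _ = (dd * aa) * dd := by group
    _ = bb * dd * dd := by rw [hda]
    _ = bb * zz := by rw [zz]; group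

lemma zz_mem_center : zz ∈ Subgroup.center BraidGroup3 := by
  have hall : ∀ x : BraidGroup3, x ∈ Subgroup.centralizer {zz} := by
    intro x
    apply PresentedGroup.generated_by
    intro j
    fin_cases j
    · exact Subgroup.mem_centralizer_iff.mpr (by
        rintro h rfl
        exact hza)
    · exact Subgroup.mem_centralizer_iff.mpr (by
        rintro h rfl
        exact hzb)
  exact Subgroup.mem_center_iff.mpr fun g =>
    (Subgroup.mem_centralizer_iff.mp (hall g) zz rfl).symm

lemma ht3 : tt * (tt * tt) = zz := by
  have h : tt * (tt * tt) = dd * (bb * aa * bb) := by rw [dd, tt]; group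
  rw [h, ← hbraid, zz, dd]

lemma haexp : aa = tt * tt * dd⁻¹ := by
  have h : aa = tt * tt * (bb * aa * bb)⁻¹ := by rw [tt]; group
  rw [h, ← hbraid, dd]

lemma hbexp : bb = dd * tt⁻¹ := by
  have h : bb = (bb * aa * bb) * tt⁻¹ := by rw [tt]; group
  rw [h, ← hbraid, dd]

lemma closure_dt : Subgroup.closure ({dd, tt} : Set BraidGroup3) = ⊤ := by
  rw [eq_top_iff]
  intro g _
  apply PresentedGroup.generated_by
  intro j
  have hd : dd ∈ Subgroup.closure ({dd, tt} : Set BraidGroup3) :=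
    Subgroup.subset_closure (by simp)
  have ht : tt ∈ Subgroup.closure ({dd, tt} : Set BraidGroup3) :=
    Subgroup.subset_closure (by simp)
  fin_cases j
  · show aa ∈ _
    rw [haexp]
    exact Subgroup.mul_mem _ (Subgroup.mul_mem _ ht ht) (Subgroup.inv_mem _ hd)
  · show bb ∈ _
    rw [hbexp]
    exact Subgroup.mul_mem _ hd (Subgroup.inv_mem _ ht)




lemma wb_cons {G : Type*} [Group G] (x y : G) (b : Bool) (bs : List Bool) :
    wb x y (b :: bs) = blk x y b * wb x y bs := by unfold wb; simp

lemma central_pull (k : ℤ) (x y : BraidGroup3) :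
    x * (zz ^ k * y) = zz ^ k * (x * y) := by
  have h0 : Commute x zz := Subgroup.mem_center_iff.mp zz_mem_center x
  have hc : Commute (zz ^ k) x := (h0.symm).zpow_left k
  rw [← mul_assoc, ← hc.eq, mul_assoc]

def NF (g : BraidGroup3) : Prop :=
  ∃ (k : ℤ) (e : Bool) (bs : List Bool) (f : Fin 3),
    g = zz ^ k * wrd dd tt e bs f

lemma nf_one : NF 1 := ⟨0, false, [], 0, by simp [wrd, wb]⟩

lemma step_d {g : BraidGroup3} (h : NF g) : NF (dd * g) := by
  obtain ⟨k, e, bs, f, rfl⟩ := h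
  cases e
  · exact ⟨k, true, bs, f, by rw [central_pull]; congr 1; unfold wrd; simp [mul_assoc]⟩
  · refine ⟨k + 1, false, bs, f, ?_⟩
    rw [central_pull, _root_.zpow_add_one, mul_assoc]
    congr 1
    unfold wrd
    show dd * (dd * wb dd tt bs * tt ^ (f : ℕ)) = zz * (1 * wb dd tt bs * tt ^ (f : ℕ))
    rw [zz]
    group

lemma step_t {g : BraidGroup3} (h : NF g) : NF (tt * g) := by
  obtain ⟨k, e, bs, f, rfl⟩ := h
  cases e
  case true =>
    refine ⟨k, false, false :: bs, f, ?_⟩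
    rw [central_pull]
    congr 1
    unfold wrd
    rw [wb_cons]
    show tt * (dd * wb dd tt bs * tt ^ (f : ℕ)) = 1 * (blk dd tt false * wb dd tt bs) * tt ^ (f : ℕ)
    show tt * (dd * wb dd tt bs * tt ^ (f : ℕ)) = 1 * ((tt * dd) * wb dd tt bs) * tt ^ (f : ℕ)
    group
  case false =>
    cases bs with
    | nil =>
      rcases f with ⟨fv, hf⟩
      interval_cases fv
      · refine ⟨k, false, [], 1, ?_⟩
        rw [central_pull]
        congr 1
      · refine ⟨k, false, [], 2, ?_⟩
        rw [central_pull]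
        congr 1
      · refine ⟨k + 1, false, [], 0, ?_⟩
        rw [central_pull, _root_.zpow_add_one, mul_assoc]
        congr 1
        show tt * (1 * 1 * tt ^ 2) = zz * (1 * 1 * tt ^ 0)
        rw [← ht3]
        group
    | cons b bs' =>
      cases b
      case false =>
        refine ⟨k, false, true :: bs', f, ?_⟩
        rw [central_pull]
        congr 1
        unfold wrd
        rw [wb_cons, wb_cons]
        show tt * (1 * ((tt * dd) * wb dd tt bs') * tt ^ (f : ℕ)) =
          1 * ((tt * (tt * dd)) * wb dd tt bs') * tt ^ (f : ℕ)
        group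
      case true =>
        refine ⟨k + 1, true, bs', f, ?_⟩
        rw [central_pull, _root_.zpow_add_one, mul_assoc]
        congr 1
        unfold wrd
        rw [wb_cons]
        show tt * (1 * ((tt * (tt * dd)) * wb dd tt bs') * tt ^ (f : ℕ)) =
          zz * (dd * wb dd tt bs' * tt ^ (f : ℕ))
        rw [← ht3]
        group

lemma nf_zpow_mul {g : BraidGroup3} (m : ℤ) (h : NF g) : NF (zz ^ m * g) := by
  obtain ⟨k, e, bs, f, rfl⟩ := h
  exact ⟨m + k, e, bs, f, by rw [← mul_assoc, ← _root_.zpow_add]⟩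

lemma step_d_inv {g : BraidGroup3} (h : NF g) : NF (dd⁻¹ * g) := by
  have hd : dd⁻¹ = zz ^ (-1 : ℤ) * dd := by
    have h1 : dd * (zz ^ (-1 : ℤ) * dd) = 1 := by
      rw [central_pull, show dd * dd = zz from rfl, _root_.zpow_neg_one, inv_mul_cancel]
    exact inv_eq_of_mul_eq_one_right h1
  rw [hd, mul_assoc]
  exact nf_zpow_mul _ (step_d h)

lemma step_t_inv {g : BraidGroup3} (h : NF g) : NF (tt⁻¹ * g) := by
  have hd : tt⁻¹ = zz ^ (-1 : ℤ) * (tt * tt) := by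
    have h1 : tt * (zz ^ (-1 : ℤ) * (tt * tt)) = 1 := by
      rw [central_pull, ht3, _root_.zpow_neg_one, inv_mul_cancel]
    exact inv_eq_of_mul_eq_one_right h1
  rw [hd, mul_assoc, mul_assoc]
  exact nf_zpow_mul _ (step_t (step_t h))

lemma nf_all : ∀ g : BraidGroup3, NF g := by
  intro g
  have hg : g ∈ Subgroup.closure ({dd, tt} : Set BraidGroup3) := by
    rw [closure_dt]; trivial
  induction hg using Subgroup.closure_induction_left with
  | one => exact nf_one
  | mul_left x hx y hy ih =>
    rcases hx with rfl | rfl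
    · exact step_d ih
    · exact step_t ih
  | inv_mul_cancel x hx y hy ih =>
    rcases hx with rfl | rfl
    · exact step_d_inv ih
    · exact step_t_inv ih


def fgen : Fin 2 → SL2Z := ![T, Bm]

lemma hrels : ∀ r ∈ braidRel3, FreeGroup.lift fgen r = 1 := by
  intro r hr
  have hr' : r = FreeGroup.of 0 * FreeGroup.of 1 * FreeGroup.of 0 *
      (FreeGroup.of 1)⁻¹ * (FreeGroup.of 0)⁻¹ * (FreeGroup.of 1)⁻¹ :=
    Set.mem_singleton_iff.mp hr
  subst hr'
  simp only [_root_.map_mul, map_inv, FreeGroup.lift_apply_of]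
  show fgen 0 * fgen 1 * fgen 0 * (fgen 1)⁻¹ * (fgen 0)⁻¹ * (fgen 1)⁻¹ = 1
  have h0 : fgen 0 = T := rfl
  have h1 : fgen 1 = Bm := rfl
  rw [h0, h1]
  have hb : T * Bm * T = Bm * T * Bm := Subtype.ext (by decide)
  calc T * Bm * T * Bm⁻¹ * T⁻¹ * Bm⁻¹
      = (T * Bm * T) * (Bm * T * Bm)⁻¹ := by group
    _ = 1 := by rw [hb]; group

def φ : BraidGroup3 →* SL2Z := PresentedGroup.toGroup hrels

lemma hφa : φ aa = T := PresentedGroup.toGroup.of hrels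
lemma hφb : φ bb = Bm := PresentedGroup.toGroup.of hrels

lemma hφd : φ dd = XX := by
  show φ (aa * bb * aa) = XX
  rw [_root_.map_mul, _root_.map_mul, hφa, hφb]
  exact Subtype.ext (by decide)

lemma hφt : φ tt = YY := by
  show φ (aa * bb) = YY
  rw [_root_.map_mul, hφa, hφb]
  exact Subtype.ext (by decide)

lemma hφz : φ zz = negOne := by
  show φ (dd * dd) = negOne
  rw [_root_.map_mul, hφd]
  exact Subtype.ext (by decide)

def ψ : BraidGroup3 →* (SL2Z ⧸ Subgroup.center SL2Z) :=
  (QuotientGroup.mk' (Subgroup.center SL2Z)).comp φ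

lemma hφsurj : Function.Surjective φ := by
  have hle : Subgroup.closure ({T, Bm} : Set SL2Z) ≤ φ.range := by
    rw [Subgroup.closure_le]
    rintro x (rfl | rfl)
    · exact ⟨aa, hφa⟩
    · exact ⟨bb, hφb⟩
  rw [closure_TBm] at hle
  intro x
  exact hle (Subgroup.mem_top x)

lemma hψsurj : Function.Surjective ψ :=
  (QuotientGroup.mk'_surjective _).comp hφsurj

lemma hψzz : ψ zz = 1 := by
  show QuotientGroup.mk' _ (φ zz) = 1
  rw [hφz]
  exact (QuotientGroup.eq_one_iff _).mpr ((mem_center_iff' _).mpr (Or.inr rfl))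

lemma hker : ψ.ker = Subgroup.center BraidGroup3 := by
  apply le_antisymm
  · intro g hg
    rw [MonoidHom.mem_ker] at hg
    obtain ⟨k, e, bs, f, rfl⟩ := nf_all g
    have hval : ψ (zz ^ k * wrd dd tt e bs f) =
        ψ zz ^ k * QuotientGroup.mk' _ (wrd XX YY e bs f) := by
      rw [_root_.map_mul, _root_.map_zpow]
      congr 1
      show QuotientGroup.mk' _ (φ (wrd dd tt e bs f)) = _
      rw [map_wrd, hφd, hφt]
    rw [hval, hψzz, _root_.one_zpow, one_mul] at hg
    have hcen : wrd XX YY e bs f ∈ Subgroup.center SL2Z :=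
      (QuotientGroup.eq_one_iff _).mp hg
    obtain ⟨he, hbs, hf⟩ := wrd_pm_one ((mem_center_iff' _).mp hcen)
    subst he; subst hbs; subst hf
    have hw1 : wrd dd tt false [] 0 = 1 := by
      show (1 : BraidGroup3) * 1 * tt ^ 0 = 1
      group
    rw [hw1, mul_one]
    exact Subgroup.zpow_mem _ zz_mem_center k
  · intro z hz
    rw [MonoidHom.mem_ker]
    have hmem : ψ z ∈ Subgroup.center (SL2Z ⧸ Subgroup.center SL2Z) := by
      rw [Subgroup.mem_center_iff]
      intro q
      obtain ⟨g, rfl⟩ := hψsurj q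
      rw [← _root_.map_mul, ← _root_.map_mul, Subgroup.mem_center_iff.mp hz g]
    rw [center_psl_eq_bot] at hmem
    exact hmem

end B3PSL

/-- `B₃` modulo its center is isomorphic to `PSL(2, ℤ)`. -/
theorem braidGroup3_mod_center_iso_PSL2Z :
    Nonempty ((BraidGroup3 ⧸ Subgroup.center BraidGroup3) ≃*
      (Matrix.SpecialLinearGroup (Fin 2) ℤ ⧸
        Subgroup.center (Matrix.SpecialLinearGroup (Fin 2) ℤ))) := by
  exact ⟨(QuotientGroup.quotientMulEquivOfEq B3PSL.hker.symm).trans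
    (QuotientGroup.quotientKerEquivOfSurjective B3PSL.ψ B3PSL.hψsurj)⟩
end
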